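/- arXiv:1412.7640 — 5 statements merged into one kernel-verified Lean document; each statement's English description precedes it below -/
import Mathlib

section
/- Let (a_n)_{n ≥ 1} be a sequence of nonnegative real numbers and set Ã_n = (1/n) ∑_{k=1}^n a_k. Assume there exist C > 0 and m > 1 such that for every n ≥ 1, ∑_{k=1}^n a_k^m ≤ C · n · Ã_n^m. Then for every real s with 1 ≤ s ≤ m and every n ≥ 1, ∑_{k=1}^n a_k^s ≤ C^{m(s-1)/(s(m-1))} · n · Ã_n^s. -/
open Finset

/-- If `∑_{k=1}^n a_k^m ≤ C n Ã_n^m` for some `m > 1`, then for every `1 ≤ s ≤ m`,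
`∑_{k=1}^n a_k^s ≤ C^{m(s-1)/(s(m-1))} n Ã_n^s`. -/
theorem power_sum_interpolation (a : ℕ → ℝ) (ha : ∀ n, 0 ≤ a n)
    (C m : ℝ) (hC : 0 < C) (hm : 1 < m)
    (h : ∀ n : ℕ, 1 ≤ n →
      ∑ k ∈ Finset.Icc 1 n, a k ^ m ≤
        C * n * ((∑ k ∈ Finset.Icc 1 n, a k) / n) ^ m) :
    ∀ s : ℝ, 1 ≤ s → s ≤ m → ∀ n : ℕ, 1 ≤ n →
      ∑ k ∈ Finset.Icc 1 n, a k ^ s ≤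
        C ^ (m * (s - 1) / (s * (m - 1))) * n * ((∑ k ∈ Finset.Icc 1 n, a k) / n) ^ s := by
  intro s hs1 hsm n hn
  have hn0 : (0:ℝ) < n := by exact_mod_cast hn
  have hm1 : (0:ℝ) < m - 1 := by linarith
  set T := ∑ k ∈ Finset.Icc 1 n, a k with hTdef
  have hT0 : 0 ≤ T := Finset.sum_nonneg fun k _ => ha k
  -- case s = 1
  rcases eq_or_lt_of_le hs1 with h1 | hs1'
  · subst h1
    simp only [Real.rpow_one, sub_self, mul_zero, zero_div, Real.rpow_zero, one_mul]
    have : (n:ℝ) * (T / n) = T := by field_simp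
    rw [this]
  have hs0 : (0:ℝ) < s := by linarith
  -- case T = 0
  rcases eq_or_lt_of_le hT0 with hT0' | hTpos
  · have hall : ∀ k ∈ Finset.Icc 1 n, a k = 0 := by
      intro k hk
      have := (Finset.sum_eq_zero_iff_of_nonneg (fun k _ => ha k)).1 hT0'.symm
      exact this k hk
    have hL : ∑ k ∈ Finset.Icc 1 n, a k ^ s = 0 :=
      Finset.sum_eq_zero fun k hk => by rw [hall k hk, Real.zero_rpow hs0.ne']
    rw [hL, ← hT0', zero_div, Real.zero_rpow hs0.ne', mul_zero]
  -- now T > 0; derive 1 ≤ C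
  have hSm := h n hn
  have hA : (0:ℝ) < T / n := div_pos hTpos hn0
  have hpow : T ^ m ≤ (n:ℝ) ^ (m - 1) * ∑ k ∈ Finset.Icc 1 n, a k ^ m := by
    have H := Real.rpow_sum_le_const_mul_sum_rpow (Finset.Icc 1 n) a hm.le
    have habs : ∀ k, |a k| = a k := fun k => abs_of_nonneg (ha k)
    simp only [habs, Nat.card_Icc, Nat.add_sub_cancel] at H
    exact_mod_cast H
  have hC1 : 1 ≤ C := by
    have h2 : (n:ℝ) ^ (m - 1) * ∑ k ∈ Finset.Icc 1 n, a k ^ m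
        ≤ (n:ℝ) ^ (m - 1) * (C * n * (T / n) ^ m) :=
      mul_le_mul_of_nonneg_left hSm (Real.rpow_nonneg hn0.le _)
    have h3 : (n:ℝ) ^ (m - 1) * (C * n * (T / n) ^ m) = C * T ^ m := by
      have hnm : (n:ℝ) ^ (m - 1) * (n:ℝ) = (n:ℝ) ^ m := by
        rw [← Real.rpow_add_one hn0.ne' (m - 1)]; ring_nf
      have : (n:ℝ) ^ m * (T / n) ^ m = T ^ m := by
        rw [← Real.mul_rpow hn0.le hA.le]
        congr 1
        field_simp
      calc (n:ℝ) ^ (m - 1) * (C * n * (T / n) ^ m)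
          = C * ((n:ℝ) ^ (m - 1) * (n:ℝ) * (T / n) ^ m) := by ring
        _ = C * ((n:ℝ) ^ m * (T / n) ^ m) := by rw [hnm]
        _ = C * T ^ m := by rw [this]
    have h4 : T ^ m ≤ C * T ^ m := le_trans hpow (le_trans h2 h3.le)
    have hTm : 0 < T ^ m := Real.rpow_pos_of_pos hTpos m
    nlinarith
  -- case s = m
  rcases eq_or_lt_of_le hsm with h2 | hsm'
  · rw [h2, div_self (by nlinarith : (0:ℝ) < m * (m - 1)).ne', Real.rpow_one]
    exact hSm
  -- main case 1 < s < m
  set lam : ℝ := (m - s) / (m - 1) with hlamdef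
  have hl1m : 1 - lam = (s - 1) / (m - 1) := by
    rw [hlamdef]; field_simp; ring
  have hlam0 : 0 < lam := div_pos (by linarith) hm1
  have hlam1 : lam < 1 := by
    rw [div_lt_one hm1]; linarith
  have hms : (0:ℝ) < m - s := by linarith
  have hs1'' : (0:ℝ) < s - 1 := by linarith
  have hpq : Real.HolderConjugate ((m - 1) / (m - s)) ((m - 1) / (s - 1)) := by
    rw [Real.holderConjugate_iff]
    constructor
    · rw [lt_div_iff₀ hms]; linarith
    · field_simp; ring
  have key : ∑ k ∈ Finset.Icc 1 n, a k ^ s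
      ≤ T ^ lam * (∑ k ∈ Finset.Icc 1 n, a k ^ m) ^ (1 - lam) := by
    have H := Real.inner_le_Lp_mul_Lq (Finset.Icc 1 n)
      (fun k => a k ^ lam) (fun k => a k ^ (s - lam)) hpq
    have e1 : ∀ k, a k ^ lam * a k ^ (s - lam) = a k ^ s := by
      intro k
      rw [← Real.rpow_add' (ha k) (by rw [add_sub_cancel]; exact hs0.ne'), add_sub_cancel]
    have e2 : ∀ k, |a k ^ lam| ^ ((m - 1) / (m - s)) = a k := by
      intro k
      rw [abs_of_nonneg (Real.rpow_nonneg (ha k) _), ← Real.rpow_mul (ha k),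
        show lam * ((m - 1) / (m - s)) = 1 by
          rw [hlamdef]; field_simp, Real.rpow_one]
    have e3 : ∀ k, |a k ^ (s - lam)| ^ ((m - 1) / (s - 1)) = a k ^ m := by
      intro k
      rw [abs_of_nonneg (Real.rpow_nonneg (ha k) _), ← Real.rpow_mul (ha k)]
      congr 1
      rw [hlamdef]; field_simp; ring
    have e4 : 1 / ((m - 1) / (m - s)) = lam := by
      rw [one_div_div, hlamdef]
    have e5 : 1 / ((m - 1) / (s - 1)) = 1 - lam := by
      rw [one_div_div]
      exact hl1m.symm
    simp only [e1, e2, e3, e4, e5] at H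
    exact H
  -- bound the m-sum
  have hSm0 : 0 ≤ ∑ k ∈ Finset.Icc 1 n, a k ^ m :=
    Finset.sum_nonneg fun k _ => Real.rpow_nonneg (ha k) m
  have h1l : (0:ℝ) < 1 - lam := by linarith
  have step2 : T ^ lam * (∑ k ∈ Finset.Icc 1 n, a k ^ m) ^ (1 - lam)
      ≤ T ^ lam * (C * n * (T / n) ^ m) ^ (1 - lam) := by
    apply mul_le_mul_of_nonneg_left _ (Real.rpow_nonneg hT0 _)
    exact Real.rpow_le_rpow hSm0 hSm h1l.le
  have hrhs : T ^ lam * (C * n * (T / n) ^ m) ^ (1 - lam)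
      = C ^ (1 - lam) * n * (T / n) ^ s := by
    have hTeq : T = (n:ℝ) * (T / n) := by field_simp
    have hAm : (0:ℝ) ≤ (T / n) ^ m := Real.rpow_nonneg hA.le m
    have hAs : (T / (n:ℝ)) ^ lam * (T / (n:ℝ)) ^ (m * (1 - lam)) = (T / (n:ℝ)) ^ s := by
      rw [← Real.rpow_add hA]
      congr 1
      rw [hlamdef]; field_simp; ring
    have hnn : (n:ℝ) ^ lam * (n:ℝ) ^ (1 - lam) = (n:ℝ) := by
      rw [← Real.rpow_add hn0, show lam + (1 - lam) = 1 by ring, Real.rpow_one]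
    rw [Real.mul_rpow (by positivity) hAm, Real.mul_rpow hC.le hn0.le]
    nth_rewrite 1 [hTeq]
    rw [Real.mul_rpow hn0.le hA.le, ← Real.rpow_mul hA.le]
    calc (n:ℝ) ^ lam * (T / (n:ℝ)) ^ lam
          * (C ^ (1 - lam) * (n:ℝ) ^ (1 - lam) * (T / (n:ℝ)) ^ (m * (1 - lam)))
        = C ^ (1 - lam) * ((n:ℝ) ^ lam * (n:ℝ) ^ (1 - lam))
          * ((T / (n:ℝ)) ^ lam * (T / (n:ℝ)) ^ (m * (1 - lam))) := by ring
      _ = C ^ (1 - lam) * (n:ℝ) * (T / (n:ℝ)) ^ s := by rw [hnn, hAs]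
  have hexp : C ^ (1 - lam) ≤ C ^ (m * (s - 1) / (s * (m - 1))) := by
    apply Real.rpow_le_rpow_of_exponent_le hC1
    rw [hl1m, div_le_div_iff₀ hm1 (by positivity)]
    nlinarith [mul_le_mul_of_nonneg_right hsm (mul_nonneg hs1''.le hm1.le)]
  calc ∑ k ∈ Finset.Icc 1 n, a k ^ s
      ≤ T ^ lam * (C * n * (T / n) ^ m) ^ (1 - lam) := le_trans key step2
    _ = C ^ (1 - lam) * n * (T / n) ^ s := hrhs
    _ ≤ C ^ (m * (s - 1) / (s * (m - 1))) * n * (T / n) ^ s := by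
        apply mul_le_mul_of_nonneg_right _ (Real.rpow_nonneg hA.le s)
        exact mul_le_mul_of_nonneg_right hexp hn0.le
end

section
/- Let a : ℕ → [0,∞) be a nonnegative arithmetical function with summatory function A(x) = ∑_{n ≤ x} a(n), and assume A(x) ~ x^α L(x) as x → ∞ for some α > 0 and some positive, non-decreasing, slowly varying function L (i.e. L(Kx)/L(x) → 1 as x → ∞ for every K > 0). Let b : ℕ → ℝ be an arithmetical function with ∑_{n ≥ 1} |b(n)|/n^α < ∞. Then lim_{n→∞} (1/A(n)) ∑_{k=1}^n (b * a)(k) = ∑_{m=1}^∞ b(m)/m^α, where (b * a)(k) = ∑_{d | k} b(d) a(k/d) is the Dirichlet convolution. -/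
open Filter Finset

lemma key_identity (b a : ℕ → ℝ) (n : ℕ) :
    ∑ k ∈ Icc 1 n, ∑ d ∈ k.divisors, b d * a (k / d)
      = ∑ d ∈ Icc 1 n, b d * ∑ q ∈ Icc 1 (n / d), a q := by
  have h1 : ∀ k ∈ Icc 1 n, ∑ d ∈ k.divisors, b d * a (k / d)
      = ∑ p ∈ k.divisorsAntidiagonal, b p.1 * a p.2 := by
    intro k _
    rw [← Nat.map_div_right_divisors, Finset.sum_map]
    rfl
  rw [Finset.sum_congr rfl h1]
  simp_rw [Finset.mul_sum]
  rw [Finset.sum_sigma', Finset.sum_sigma']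
  apply Finset.sum_nbij' (fun p => ⟨p.2.1, p.2.2⟩) (fun p => ⟨p.1 * p.2, (p.1, p.2)⟩)
  · rintro ⟨k, d, e⟩ h
    simp only [Finset.mem_sigma, Finset.mem_Icc, Nat.mem_divisorsAntidiagonal] at h ⊢
    obtain ⟨⟨hk1, hk2⟩, hde, hk0⟩ := h
    subst hde
    refine ⟨⟨Nat.one_le_iff_ne_zero.2 (by rintro rfl; simp at hk0), le_trans (Nat.le_mul_of_pos_right _ (Nat.pos_of_ne_zero (by rintro rfl; simp at hk0))) hk2⟩, Nat.one_le_iff_ne_zero.2 (by rintro rfl; simp at hk0), ?_⟩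
    exact Nat.le_div_iff_mul_le (Nat.pos_of_ne_zero (by rintro rfl; simp at hk0)) |>.2 (by rw [mul_comm]; exact hk2)
  · rintro ⟨d, q⟩ h
    simp only [Finset.mem_sigma, Finset.mem_Icc, Nat.mem_divisorsAntidiagonal] at h
    obtain ⟨⟨hd1, hd2⟩, hq1, hq2⟩ := h
    have hd0 : 0 < d := hd1
    have hmul : d * q ≤ n := by
      rw [Nat.le_div_iff_mul_le hd0] at hq2
      linarith [hq2]
    have hdq : d * q ≠ 0 := Nat.mul_ne_zero hd0.ne' (Nat.lt_of_lt_of_le Nat.zero_lt_one hq1).ne'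
    exact Finset.mem_sigma.2 ⟨Finset.mem_Icc.2 ⟨Nat.one_le_iff_ne_zero.2 hdq, hmul⟩,
      Nat.mem_divisorsAntidiagonal.2 ⟨rfl, hdq⟩⟩
  · rintro ⟨k, d, e⟩ h
    simp only [Finset.mem_sigma, Nat.mem_divisorsAntidiagonal] at h
    obtain ⟨_, hde, _⟩ := h
    simp [hde]
  · rintro ⟨d, q⟩ h
    rfl
  · rintro ⟨k, d, e⟩ h
    rfl

lemma nat_div_tendsto_atTop {d : ℕ} (hd : 0 < d) :
    Tendsto (fun n : ℕ => n / d) atTop atTop := by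
  apply tendsto_atTop_atTop.2
  intro B
  exact ⟨B * d, fun n hn => (Nat.le_div_iff_mul_le hd).2 hn⟩

lemma cast_div_ratio_tendsto {d : ℕ} (hd : 0 < d) :
    Tendsto (fun n : ℕ => ((n / d : ℕ) : ℝ) / (n : ℝ)) atTop (nhds (1 / (d : ℝ))) := by
  have hd' : (0:ℝ) < d := Nat.cast_pos.2 hd
  have hlow : Tendsto (fun n : ℕ => 1 / (d:ℝ) - 1 / (n:ℝ)) atTop (nhds (1 / (d:ℝ))) := by
    simpa using tendsto_const_nhds.sub (tendsto_one_div_atTop_nhds_zero_nat (𝕜 := ℝ))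
  apply tendsto_of_tendsto_of_tendsto_of_le_of_le' hlow tendsto_const_nhds
  · filter_upwards [eventually_ge_atTop 1] with n hn
    have hn' : (0:ℝ) < n := by exact_mod_cast hn
    have key : (n : ℝ) - d ≤ (d:ℝ) * ((n / d : ℕ) : ℝ) := by
      have h1 := Nat.div_add_mod n d
      have h2 : n % d < d := Nat.mod_lt n hd
      have h1' : (d:ℝ) * ((n/d : ℕ):ℝ) + ((n % d : ℕ):ℝ) = n := by exact_mod_cast h1
      have h2' : ((n % d : ℕ):ℝ) < d := by exact_mod_cast h2
      linarith
    have heq : 1 / (d:ℝ) - 1 / (n:ℝ) = ((n:ℝ) - d) / ((d:ℝ) * n) := by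
      field_simp
    rw [heq, div_le_div_iff₀ (by positivity) hn']
    nlinarith [key, hn'.le]
  · filter_upwards [eventually_ge_atTop 1] with n hn
    have hn' : (0:ℝ) < n := by exact_mod_cast hn
    have key : (d:ℝ) * ((n / d : ℕ) : ℝ) ≤ n := by
      exact_mod_cast (Nat.mul_comm (n/d) d ▸ Nat.div_mul_le_self n d : d * (n/d) ≤ n)
    rw [div_le_div_iff₀ hn' hd']
    nlinarith

lemma slow_ratio_tendsto (L : ℝ → ℝ) (hLpos : ∀ x : ℝ, 0 ≤ x → 0 < L x)
    (hLmono : MonotoneOn L (Set.Ici (0 : ℝ)))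
    (hLslow : ∀ K : ℝ, 0 < K → Tendsto (fun x : ℝ => L (K * x) / L x) atTop (nhds 1))
    {d : ℕ} (hd : 0 < d) :
    Tendsto (fun n : ℕ => L ((n / d : ℕ) : ℝ) / L (n : ℝ)) atTop (nhds 1) := by
  have hd' : (0:ℝ) < d := Nat.cast_pos.2 hd
  have hlow : Tendsto (fun n : ℕ => L ((1 / (2 * (d:ℝ))) * (n:ℝ)) / L (n:ℝ)) atTop (nhds 1) :=
    (hLslow (1 / (2 * (d:ℝ))) (by positivity)).comp tendsto_natCast_atTop_atTop
  apply tendsto_of_tendsto_of_tendsto_of_le_of_le' hlow tendsto_const_nhds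
  · filter_upwards [eventually_ge_atTop (2 * d)] with n hn
    have hn' : (0:ℝ) ≤ n := Nat.cast_nonneg n
    have hLn : 0 < L (n:ℝ) := hLpos _ hn'
    have key : (1 / (2 * (d:ℝ))) * (n:ℝ) ≤ ((n / d : ℕ) : ℝ) := by
      have h1 := Nat.div_add_mod n d
      have h2 : n % d < d := Nat.mod_lt n (by omega)
      have h1' : (d:ℝ) * ((n/d : ℕ):ℝ) + ((n % d : ℕ):ℝ) = n := by exact_mod_cast h1
      have h2' : ((n % d : ℕ):ℝ) < d := by exact_mod_cast h2
      have hn2 : (2:ℝ) * d ≤ n := by exact_mod_cast hn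
      rw [div_mul_eq_mul_div, one_mul, div_le_iff₀ (by positivity)]
      nlinarith
    have := hLmono (Set.mem_Ici.2 (by positivity)) (Set.mem_Ici.2 (le_trans (by positivity) key)) key
    exact by gcongr
  · filter_upwards [eventually_ge_atTop 1] with n hn
    have hn' : (0:ℝ) ≤ n := Nat.cast_nonneg n
    have hLn : 0 < L (n:ℝ) := hLpos _ hn'
    have key : ((n / d : ℕ) : ℝ) ≤ (n:ℝ) := by exact_mod_cast Nat.div_le_self n d
    have hm := hLmono (Set.mem_Ici.2 (Nat.cast_nonneg _)) (Set.mem_Ici.2 hn') key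
    calc L ((n / d : ℕ) : ℝ) / L (n:ℝ) ≤ L (n:ℝ) / L (n:ℝ) := by gcongr
      _ = 1 := div_self hLn.ne'


lemma A_ratio_tendsto (A : ℕ → ℝ) (α : ℝ) (hα : 0 < α)
    (L : ℝ → ℝ) (hLpos : ∀ x : ℝ, 0 ≤ x → 0 < L x)
    (t2c : ∀ {d : ℕ}, 0 < d → Tendsto (fun n : ℕ => L ((n / d : ℕ) : ℝ) / L (n : ℝ)) atTop (nhds 1))
    (hA : Tendsto (fun n : ℕ => A n / ((n : ℝ) ^ α * L n)) atTop (nhds 1))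
    {d : ℕ} (hd : 0 < d)
    (cast_ratio : Tendsto (fun n : ℕ => ((n / d : ℕ) : ℝ) / (n : ℝ)) atTop (nhds (1 / (d : ℝ)))) :
    Tendsto (fun n : ℕ => A (n / d) / A n) atTop (nhds (1 / (d : ℝ) ^ α)) := by
  have hd' : (0:ℝ) < d := Nat.cast_pos.2 hd
  have t1 : Tendsto (fun n : ℕ => A (n / d) / (((n / d : ℕ) : ℝ) ^ α * L ((n / d : ℕ) : ℝ)))
      atTop (nhds 1) := hA.comp (nat_div_tendsto_atTop hd)
  have t3 : Tendsto (fun n : ℕ => ((n : ℝ) ^ α * L n) / A n) atTop (nhds 1) := by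
    have := hA.inv₀ one_ne_zero
    simpa [inv_div] using this
  have t2b : Tendsto (fun n : ℕ => (((n / d : ℕ) : ℝ) / (n : ℝ)) ^ α) atTop
      (nhds ((1 / (d : ℝ)) ^ α)) :=
    ((Real.continuousAt_rpow_const _ α (Or.inl (by positivity))).tendsto).comp cast_ratio
  have tprod := ((t1.mul t2b).mul (t2c hd)).mul t3
  have hApos : ∀ᶠ n : ℕ in atTop, 0 < A n := by
    have h12 : ∀ᶠ n : ℕ in atTop, (1:ℝ)/2 < A n / ((n : ℝ) ^ α * L n) :=
      hA.eventually (lt_mem_nhds (by norm_num : (1:ℝ)/2 < 1))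
    filter_upwards [h12, eventually_ge_atTop 1] with n h1 h2
    have hn' : (0:ℝ) < n := by exact_mod_cast h2
    have hg : (0:ℝ) < (n : ℝ) ^ α * L n := by
      have := hLpos (n:ℝ) hn'.le
      positivity
    have hpos := lt_trans (by norm_num : (0:ℝ) < 1/2) h1
    rcases div_pos_iff.1 hpos with ⟨h,_⟩|⟨_,h⟩
    · exact h
    · linarith
  have heq : ∀ᶠ n : ℕ in atTop,
      (A (n / d) / (((n / d : ℕ) : ℝ) ^ α * L ((n / d : ℕ) : ℝ)) *
        ((((n / d : ℕ) : ℝ) / (n : ℝ)) ^ α) * (L ((n / d : ℕ) : ℝ) / L (n : ℝ)) *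
        (((n : ℝ) ^ α * L n) / A n)) = A (n / d) / A n := by
    filter_upwards [hApos, eventually_ge_atTop (max d 1)] with n hAn hn
    have hnd : 1 ≤ n / d := (Nat.one_le_div_iff hd).2 (le_trans (le_max_left _ _) hn)
    have hn1 : 1 ≤ n := le_trans (le_max_right _ _) hn
    have hq' : (0:ℝ) < ((n / d : ℕ) : ℝ) := by exact_mod_cast hnd
    have hn' : (0:ℝ) < (n : ℝ) := by exact_mod_cast hn1
    have hLq : 0 < L ((n / d : ℕ) : ℝ) := hLpos _ hq'.le
    have hLn : 0 < L (n : ℝ) := hLpos _ hn'.le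
    have hqα : (0:ℝ) < ((n / d : ℕ) : ℝ) ^ α := Real.rpow_pos_of_pos hq' α
    have hnα : (0:ℝ) < (n : ℝ) ^ α := Real.rpow_pos_of_pos hn' α
    rw [Real.div_rpow hq'.le hn'.le]
    field_simp
  have hval : ((1 * (1 / (d:ℝ)) ^ α) * 1) * 1 = 1 / (d : ℝ) ^ α := by
    rw [Real.div_rpow zero_le_one hd'.le, Real.one_rpow]
    ring
  rw [← hval]
  exact tprod.congr' heq

/-- Wintner-type lemma: if `A(x) ~ x^α L(x)` with `L` positive, non-decreasing and slowly
varying, and `∑ |b(n)|/n^α < ∞`, then `(1/A(n)) ∑_{k ≤ n} (b*a)(k) → ∑ b(m)/m^α`. -/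
theorem dirichlet_convolution_summatory_limit
    (a : ℕ → ℝ) (ha : ∀ n, 0 ≤ a n) (α : ℝ) (hα : 0 < α)
    (L : ℝ → ℝ) (hLpos : ∀ x : ℝ, 0 ≤ x → 0 < L x)
    (hLmono : MonotoneOn L (Set.Ici (0 : ℝ)))
    (hLslow : ∀ K : ℝ, 0 < K →
      Tendsto (fun x : ℝ => L (K * x) / L x) atTop (nhds 1))
    (hA : Tendsto (fun n : ℕ =>
        (∑ k ∈ Finset.Icc 1 n, a k) / ((n : ℝ) ^ α * L n)) atTop (nhds 1))
    (b : ℕ → ℝ)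
    (hb : Summable (fun n : ℕ => |b (n + 1)| / ((n + 1 : ℝ)) ^ α)) :
    Tendsto (fun n : ℕ =>
        (∑ k ∈ Finset.Icc 1 n, ∑ d ∈ k.divisors, b d * a (k / d)) /
          (∑ k ∈ Finset.Icc 1 n, a k))
      atTop (nhds (∑' m : ℕ, b (m + 1) / ((m + 1 : ℝ)) ^ α)) := by
  set A : ℕ → ℝ := fun m => ∑ k ∈ Finset.Icc 1 m, a k with hAdef
  have hA0 : A 0 = 0 := by simp [hAdef]
  have hAnonneg : ∀ m, 0 ≤ A m := fun m => Finset.sum_nonneg fun k _ => ha k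
  -- the function f
  set f : ℕ → ℕ → ℝ := fun n m => b (m + 1) * (A (n / (m + 1)) / A n) with hfdef
  -- the identity
  have hfun : ∀ n : ℕ, (∑ k ∈ Finset.Icc 1 n, ∑ d ∈ k.divisors, b d * a (k / d)) / A n
      = ∑' m : ℕ, f n m := by
    intro n
    rw [key_identity]
    have h1 : (∑ d ∈ Finset.Icc 1 n, b d * A (n / d)) / A n
        = ∑ d ∈ Finset.Icc 1 n, b d * (A (n / d) / A n) := by
      rw [Finset.sum_div]
      exact Finset.sum_congr rfl fun d _ => (mul_div_assoc _ _ _)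
    rw [h1]
    have h2 : ∑ d ∈ Finset.Icc 1 n, b d * (A (n / d) / A n) = ∑ m ∈ Finset.range n, f n m := by
      rw [← Finset.Ico_add_one_right_eq_Icc, Finset.sum_Ico_eq_sum_range]
      have hnn : n + 1 - 1 = n := by omega
      rw [hnn]
      exact Finset.sum_congr rfl fun m _ => by rw [hfdef]; rw [Nat.add_comm 1 m]
    rw [h2]
    refine (tsum_eq_sum ?_).symm
    intro m hm
    have hnm : n < m + 1 := by
      simpa using Nat.lt_of_not_le (fun h : m + 1 ≤ n => hm (Finset.mem_range.2 (by omega)))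
    simp [hfdef, Nat.div_eq_of_lt hnm, hA0]
  -- upper bound constant
  obtain ⟨C0, hC0⟩ := hA.bddAbove_range
  set C : ℝ := max C0 1 with hCdef
  have hC1 : (1:ℝ) ≤ C := le_max_right _ _
  have hAle : ∀ m : ℕ, 1 ≤ m → A m ≤ C * ((m : ℝ) ^ α * L m) := by
    intro m hm
    have hm' : (0:ℝ) < m := by exact_mod_cast hm
    have hg : (0:ℝ) < (m : ℝ) ^ α * L m := by
      have := hLpos (m:ℝ) hm'.le
      positivity
    have hr : A m / ((m : ℝ) ^ α * L m) ≤ C0 := hC0 (Set.mem_range_self m)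
    calc A m = (A m / ((m : ℝ) ^ α * L m)) * ((m : ℝ) ^ α * L m) := by rw [div_mul_cancel₀ _ hg.ne']
      _ ≤ C * ((m : ℝ) ^ α * L m) := by
          apply mul_le_mul_of_nonneg_right (le_trans hr (le_max_left _ _)) hg.le
  -- eventual lower bound
  have hlower : ∀ᶠ n : ℕ in atTop,
      ((n : ℝ) ^ α * L n) / 2 ≤ A n ∧ 0 < A n ∧ 1 ≤ n := by
    have h12 : ∀ᶠ n : ℕ in atTop, (1:ℝ)/2 < A n / ((n : ℝ) ^ α * L n) :=
      hA.eventually (lt_mem_nhds (by norm_num : (1:ℝ)/2 < 1))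
    filter_upwards [h12, eventually_ge_atTop 1] with n h1 hn1
    have hn' : (0:ℝ) < n := by exact_mod_cast hn1
    have hg : (0:ℝ) < (n : ℝ) ^ α * L n := by
      have := hLpos (n:ℝ) hn'.le
      positivity
    have hApos : 0 < A n := by
      have hpos := lt_trans (by norm_num : (0:ℝ) < 1/2) h1
      rcases div_pos_iff.1 hpos with ⟨h,_⟩|⟨_,h⟩
      · exact h
      · linarith
    refine ⟨?_, hApos, hn1⟩
    rw [lt_div_iff₀ hg] at h1
    linarith
  -- summable bound
  have hbound_summable : Summable (fun m : ℕ => (2*C) * (|b (m + 1)| / ((m + 1 : ℝ)) ^ α)) :=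
    hb.mul_left _
  -- eventual domination
  have h_bound : ∀ᶠ n : ℕ in atTop, ∀ m : ℕ,
      ‖f n m‖ ≤ (2*C) * (|b (m + 1)| / ((m + 1 : ℝ)) ^ α) := by
    filter_upwards [hlower] with n hn
    obtain ⟨hA2, hApos, hn1⟩ := hn
    intro m
    have hn' : (0:ℝ) < n := by exact_mod_cast hn1
    have hLn : 0 < L (n:ℝ) := hLpos _ hn'.le
    have hd' : (0:ℝ) < ((m:ℝ) + 1) := by positivity
    have hdα : (0:ℝ) < ((m:ℝ) + 1) ^ α := Real.rpow_pos_of_pos hd' α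
    have hnα : (0:ℝ) < (n:ℝ) ^ α := Real.rpow_pos_of_pos hn' α
    have hratio : A (n / (m+1)) / A n ≤ 2*C / ((m:ℝ) + 1) ^ α := by
      by_cases hq : n / (m+1) = 0
      · rw [hq, hA0, zero_div]
        positivity
      · have hq1 : 1 ≤ n / (m+1) := Nat.one_le_iff_ne_zero.2 hq
        have hq' : (0:ℝ) < ((n / (m+1) : ℕ) : ℝ) := by exact_mod_cast hq1
        have hqle : ((n / (m+1) : ℕ) : ℝ) ≤ (n:ℝ) / ((m:ℝ) + 1) := by
          rw [le_div_iff₀ hd']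
          have : (n / (m+1)) * (m+1) ≤ n := Nat.div_mul_le_self n (m+1)
          exact_mod_cast this
        have hLq : L ((n / (m+1) : ℕ) : ℝ) ≤ L (n:ℝ) := by
          apply hLmono (Set.mem_Ici.2 hq'.le) (Set.mem_Ici.2 hn'.le)
          exact_mod_cast Nat.div_le_self n (m+1)
        have hqα : ((n / (m+1) : ℕ) : ℝ) ^ α ≤ ((n:ℝ) / ((m:ℝ) + 1)) ^ α :=
          Real.rpow_le_rpow hq'.le hqle hα.le
        have hup : A (n / (m+1)) ≤ C * (((n:ℝ) ^ α / ((m:ℝ) + 1) ^ α) * L (n:ℝ)) := by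
          calc A (n / (m+1)) ≤ C * (((n / (m+1) : ℕ) : ℝ) ^ α * L ((n / (m+1) : ℕ) : ℝ)) :=
                hAle _ hq1
            _ ≤ C * (((n:ℝ) ^ α / ((m:ℝ) + 1) ^ α) * L (n:ℝ)) := by
                apply mul_le_mul_of_nonneg_left _ (le_trans zero_le_one hC1)
                have h3 := Real.div_rpow hn'.le hd'.le α
                rw [← h3]
                apply mul_le_mul hqα hLq (hLpos _ hq'.le).le
                positivity
        have hlow2 : (0:ℝ) < ((n:ℝ) ^ α * L (n:ℝ)) / 2 := by positivity
        calc A (n / (m+1)) / A n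
            ≤ (C * (((n:ℝ) ^ α / ((m:ℝ) + 1) ^ α) * L (n:ℝ))) / (((n:ℝ) ^ α * L (n:ℝ)) / 2) := by
              apply div_le_div₀ (by positivity) hup hlow2 hA2
          _ = 2*C / ((m:ℝ) + 1) ^ α := by
              field_simp
    have hnn : 0 ≤ A (n / (m+1)) / A n := div_nonneg (hAnonneg _) (hAnonneg _)
    rw [hfdef]
    simp only [norm_mul, Real.norm_eq_abs, abs_of_nonneg hnn]
    calc |b (m+1)| * (A (n / (m+1)) / A n) ≤ |b (m+1)| * (2*C / ((m:ℝ) + 1) ^ α) := by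
          apply mul_le_mul_of_nonneg_left hratio (abs_nonneg _)
      _ = (2*C) * (|b (m + 1)| / ((m + 1 : ℝ)) ^ α) := by
          push_cast
          ring
  -- pointwise limits
  have hlim : ∀ m : ℕ, Tendsto (fun n : ℕ => f n m) atTop
      (nhds (b (m + 1) / ((m + 1 : ℝ)) ^ α)) := by
    intro m
    have hd : 0 < m + 1 := Nat.succ_pos m
    have hr := A_ratio_tendsto A α hα L hLpos
      (fun {d} hd => slow_ratio_tendsto L hLpos hLmono hLslow hd) hA hd
      (cast_div_ratio_tendsto hd)
    have := hr.const_mul (b (m+1))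
    have heq : b (m+1) * (1 / ((m+1 : ℕ) : ℝ) ^ α) = b (m + 1) / ((m + 1 : ℝ)) ^ α := by
      push_cast
      ring
    rw [heq] at this
    exact this
  have hmain := tendsto_tsum_of_dominated_convergence hbound_summable hlim h_bound
  exact hmain.congr fun n => (hfun n).symm
end

section
/- Let a : ℕ → [0,∞) be a nonnegative arithmetical function with summatory function A(x) = ∑_{n ≤ x} a(n), and assume A(n) ~ n^α / (log n)^β as n → ∞ for some α, β > 0. Let b : ℕ → ℝ be an arithmetical function with ∑_{n ≥ 2} |b(n)| (log n)^β / n^α < ∞. Then lim_{n→∞} (1/A(n)) ∑_{k=1}^n (b * a)(k) = ∑_{m=1}^∞ b(m)/m^α, where (b * a)(k) = ∑_{d | k} b(d) a(k/d) is the Dirichlet convolution. -/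
open Filter Finset

set_option maxHeartbeats 1000000

lemma conv_sum (b c : ℕ → ℝ) (n : ℕ) :
    ∑ k ∈ Icc 1 n, ∑ d ∈ k.divisors, b d * c (k / d)
      = ∑ d ∈ Icc 1 n, b d * ∑ q ∈ Icc 1 (n / d), c q := by
  simp_rw [Finset.mul_sum]
  rw [Finset.sum_sigma', Finset.sum_sigma']
  apply Finset.sum_nbij' (fun p => ⟨p.2, p.1 / p.2⟩) (fun p => ⟨p.1 * p.2, p.1⟩)
  · rintro ⟨k, d⟩ hp
    simp only [Finset.mem_sigma, Finset.mem_Icc, Nat.mem_divisors] at hp ⊢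
    obtain ⟨⟨hk1, hkn⟩, hd, hk0⟩ := hp
    have hd0 : 0 < d := Nat.pos_of_mem_divisors (Nat.mem_divisors.2 ⟨hd, hk0⟩)
    refine ⟨⟨hd0, le_trans (Nat.le_of_dvd (by omega) hd) hkn⟩,
      Nat.one_le_div_iff hd0 |>.2 (Nat.le_of_dvd (by omega) hd), Nat.div_le_div_right hkn⟩
  · rintro ⟨d, q⟩ hp
    simp only [Finset.mem_sigma, Finset.mem_Icc, Nat.mem_divisors] at hp ⊢
    obtain ⟨⟨hd1, hdn⟩, hq1, hqn⟩ := hp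
    refine ⟨⟨Nat.one_le_iff_ne_zero.mpr (Nat.mul_ne_zero (by omega) (by omega)), ?_⟩, Dvd.intro q rfl, by positivity⟩
    calc d * q ≤ d * (n / d) := Nat.mul_le_mul_left d hqn
    _ ≤ n := Nat.mul_div_le n d
  · rintro ⟨k, d⟩ hp
    simp only [Finset.mem_sigma, Finset.mem_Icc, Nat.mem_divisors] at hp
    obtain ⟨⟨hk1, hkn⟩, hd, hk0⟩ := hp
    simp [Nat.mul_div_cancel' hd]
  · rintro ⟨d, q⟩ hp
    simp only [Finset.mem_sigma, Finset.mem_Icc] at hp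
    simp [Nat.mul_div_cancel_left q (by omega : 0 < d)]
  · rintro ⟨k, d⟩ hp
    simp only [Finset.mem_sigma, Finset.mem_Icc, Nat.mem_divisors] at hp
    simp
set_option maxHeartbeats 1000000
open Filter Finset

lemma unif_bound (a : ℕ → ℝ) (ha : ∀ n, 0 ≤ a n) (α β : ℝ) (hα : 0 < α) (hβ : 0 < β)
    (hA : Tendsto (fun n : ℕ =>
        (∑ k ∈ Finset.Icc 1 n, a k) / ((n : ℝ) ^ α / Real.log n ^ β)) atTop (nhds 1)) :
    ∃ C : ℝ, 0 < C ∧ ∃ N : ℕ, 3 ≤ N ∧ ∀ n, N ≤ n → 0 < (∑ k ∈ Icc 1 n, a k) ∧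
      ∀ d, 2 ≤ d → d ≤ n →
        (∑ k ∈ Icc 1 (n / d), a k) ≤
          C * (Real.log d ^ β / (d:ℝ) ^ α) * (∑ k ∈ Icc 1 n, a k) := by
  set A : ℕ → ℝ := fun n => ∑ k ∈ Icc 1 n, a k with hAdef
  obtain ⟨N₀, hN₀⟩ := Metric.tendsto_atTop.1 hA (1/2) (by norm_num)
  set N : ℕ := max N₀ 3 with hNdef
  have hN3 : 3 ≤ N := le_max_right _ _
  have hlogpos : ∀ n : ℕ, 3 ≤ n → 0 < Real.log n := by
    intro n hn
    exact Real.log_pos (by exact_mod_cast lt_of_lt_of_le (by norm_num) hn)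
  have hXpos : ∀ n : ℕ, 3 ≤ n → 0 < (n:ℝ) ^ α / Real.log n ^ β := by
    intro n hn
    have h1 : (0:ℝ) < n := by positivity
    have := hlogpos n hn
    positivity
  have hup : ∀ n : ℕ, N ≤ n → A n ≤ 2 * ((n:ℝ) ^ α / Real.log n ^ β) := by
    intro n hn
    have h := hN₀ n (le_trans (le_max_left _ _) hn)
    rw [Real.dist_eq, abs_lt] at h
    have hX := hXpos n (le_trans hN3 hn)
    have := (div_lt_iff₀ hX).1 (by linarith [h.2] : A n / ((n:ℝ) ^ α / Real.log n ^ β) < 3/2)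
    linarith
  have hlo : ∀ n : ℕ, N ≤ n → (1/2) * ((n:ℝ) ^ α / Real.log n ^ β) ≤ A n := by
    intro n hn
    have h := hN₀ n (le_trans (le_max_left _ _) hn)
    rw [Real.dist_eq, abs_lt] at h
    have hX := hXpos n (le_trans hN3 hn)
    have := (lt_div_iff₀ hX).1 (by linarith [h.1] : (1:ℝ)/2 < A n / ((n:ℝ) ^ α / Real.log n ^ β))
    linarith
  have hApos : ∀ n : ℕ, N ≤ n → 0 < A n := by
    intro n hn
    have := hlo n hn
    have hX := hXpos n (le_trans hN3 hn)
    linarith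
  have hmono : ∀ p q : ℕ, p ≤ q → A p ≤ A q := by
    intro p q h
    exact Finset.sum_le_sum_of_subset_of_nonneg (Finset.Icc_subset_Icc_right h)
      (fun i _ _ => ha i)
  set C0 : ℝ := A N with hC0def
  have hC0 : 0 < C0 := hApos N le_rfl
  have l3 : (1:ℝ) ≤ Real.log 3 := by
    rw [Real.le_log_iff_exp_le (by norm_num)]
    exact le_trans Real.exp_one_lt_d9.le (by norm_num)
  have l2 : (1/2:ℝ) < Real.log 2 := by linarith [Real.log_two_gt_d9]
  refine ⟨4 * 4 ^ β + 2 ^ β * 2 * C0, by positivity, N * N, ?_, ?_⟩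
  · calc 3 ≤ N := hN3
    _ ≤ N * N := Nat.le_mul_of_pos_left N (by omega)
  set C : ℝ := 4 * 4 ^ β + 2 ^ β * 2 * C0 with hCdef
  have hCpos : 0 < C := by positivity
  have hC1 : 4 * 4 ^ β ≤ C := by
    have : (0:ℝ) ≤ 2 ^ β * 2 * C0 := by positivity
    linarith
  intro n hn
  have hnN : N ≤ n := le_trans (Nat.le_mul_of_pos_left N (by omega)) hn
  have hn3 : 3 ≤ n := le_trans hN3 hnN
  refine ⟨hApos n hnN, ?_⟩
  intro d hd2 hdn
  set m : ℕ := n / d with hmdef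
  have hd0 : 0 < d := by omega
  have hlnpos := hlogpos n hn3
  have hldpos : 0 < Real.log d := Real.log_pos (by exact_mod_cast lt_of_lt_of_le one_lt_two hd2)
  have hnpos : (0:ℝ) < n := by positivity
  have hdposR : (0:ℝ) < d := by positivity
  by_cases hm : N ≤ m
  · -- case m ≥ N
    have hm3 : 3 ≤ m := le_trans hN3 hm
    have hmposR : (0:ℝ) < m := by exact_mod_cast lt_of_lt_of_le (by norm_num) hm3
    have hlmpos := hlogpos m hm3
    have lm1 : 1 ≤ Real.log m := by
      refine le_trans l3 (Real.log_le_log (by norm_num) ?_)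
      exact_mod_cast hm3
    have l2d : Real.log 2 ≤ Real.log d := Real.log_le_log (by norm_num) (by exact_mod_cast hd2)
    have hmdn : (m:ℝ) * (d:ℝ) ≤ (n:ℝ) := by
      have := Nat.div_mul_le_self n d
      exact_mod_cast this
    have hn2md : (n:ℝ) ≤ 2 * (m:ℝ) * (d:ℝ) := by
      have h1 : n < (m + 1) * d := by
        have hdm := Nat.div_add_mod n d
        have hr : n % d < d := Nat.mod_lt _ hd0
        have h1' : n < (n / d + 1) * d := by
          calc n = d * (n / d) + n % d := by omega
          _ < d * (n / d) + d := by omega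
          _ = (n / d + 1) * d := by ring
        rwa [← hmdef] at h1'
      have h2 : (m + 1) * d ≤ 2 * m * d := by
        have : m + 1 ≤ 2 * m := by omega
        exact Nat.mul_le_mul_right d this
      exact_mod_cast le_of_lt (lt_of_lt_of_le h1 h2)
    have hlogn_le : Real.log n ≤ Real.log 2 + Real.log m + Real.log d := by
      have h1 : Real.log n ≤ Real.log (2 * (m:ℝ) * (d:ℝ)) :=
        Real.log_le_log hnpos hn2md
      rw [Real.log_mul (by positivity) (by positivity),
          Real.log_mul (by norm_num) (by positivity)] at h1
      linarith
    have key1 : Real.log n ≤ 4 * (Real.log d * Real.log m) := by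
      nlinarith [mul_nonneg hldpos.le (sub_nonneg.2 lm1),
        mul_nonneg hlmpos.le (by linarith : (0:ℝ) ≤ 2 * Real.log d - 1)]
    have keyβ : Real.log n ^ β ≤ 4 ^ β * (Real.log d ^ β * Real.log m ^ β) := by
      calc Real.log n ^ β ≤ (4 * (Real.log d * Real.log m)) ^ β :=
            Real.rpow_le_rpow hlnpos.le key1 hβ.le
      _ = 4 ^ β * (Real.log d * Real.log m) ^ β := Real.mul_rpow (by norm_num) (by positivity)
      _ = 4 ^ β * (Real.log d ^ β * Real.log m ^ β) := by
            rw [Real.mul_rpow hldpos.le hlmpos.le]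
    have hmd : (m:ℝ) ^ α * (d:ℝ) ^ α ≤ (n:ℝ) ^ α := by
      rw [← Real.mul_rpow hmposR.le hdposR.le]
      exact Real.rpow_le_rpow (by positivity) hmdn hα.le
    have h1 : A m ≤ 2 * ((m:ℝ) ^ α / Real.log m ^ β) := hup m hm
    have h2 : (1/2) * ((n:ℝ) ^ α / Real.log n ^ β) ≤ A n := hlo n hnN
    calc A m ≤ 2 * ((m:ℝ) ^ α / Real.log m ^ β) := h1
    _ ≤ C * (Real.log d ^ β / (d:ℝ) ^ α) * ((1/2) * ((n:ℝ) ^ α / Real.log n ^ β)) := by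
        have e1 : 2 * ((m:ℝ) ^ α / Real.log m ^ β)
            = (2 * (m:ℝ) ^ α) / (Real.log m ^ β) := by ring
        have e2 : C * (Real.log d ^ β / (d:ℝ) ^ α) * ((1/2) * ((n:ℝ) ^ α / Real.log n ^ β))
            = (C * Real.log d ^ β * (n:ℝ) ^ α / 2) / ((d:ℝ) ^ α * Real.log n ^ β) := by ring
        rw [e1, e2, div_le_div_iff₀ (by positivity) (by positivity)]
        nlinarith [mul_le_mul hmd keyβ (by positivity) (by positivity),
          mul_nonneg (mul_nonneg (Real.rpow_nonneg hnpos.le α)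
            (Real.rpow_nonneg hldpos.le β)) (Real.rpow_nonneg hlmpos.le β),
          mul_nonneg (sub_nonneg.2 hC1)
            (mul_nonneg (mul_nonneg (Real.rpow_nonneg hnpos.le α)
              (Real.rpow_nonneg hldpos.le β)) (Real.rpow_nonneg hlmpos.le β))]
    _ ≤ C * (Real.log d ^ β / (d:ℝ) ^ α) * A n := by
        apply mul_le_mul_of_nonneg_left h2
        positivity
  · -- case m < N
    push_neg at hm
    have hAm : A m ≤ C0 := hmono m N (le_of_lt hm)
    have hnNd : (n:ℝ) ≤ (N:ℝ) * (d:ℝ) := by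
      have := (Nat.div_lt_iff_lt_mul hd0).1 hm
      exact_mod_cast le_of_lt this
    have hNpos : (0:ℝ) < N := by exact_mod_cast lt_of_lt_of_le (by norm_num) hN3
    have hld : Real.log n / 2 ≤ Real.log d := by
      have h1 : Real.log n ≤ Real.log N + Real.log d := by
        have := Real.log_le_log hnpos hnNd
        rwa [Real.log_mul (by positivity) (by positivity)] at this
      have h2 : 2 * Real.log N ≤ Real.log n := by
        have : Real.log ((N:ℝ) * (N:ℝ)) ≤ Real.log n := by
          apply Real.log_le_log (by positivity)
          exact_mod_cast hn
        rwa [Real.log_mul (by positivity) (by positivity), ← two_mul] at this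
      linarith
    have hldβ : Real.log n ^ β / 2 ^ β ≤ Real.log d ^ β := by
      calc Real.log n ^ β / 2 ^ β = (Real.log n / 2) ^ β :=
            (Real.div_rpow hlnpos.le (by norm_num : (0:ℝ) ≤ 2) β).symm
      _ ≤ Real.log d ^ β := Real.rpow_le_rpow (by positivity) hld hβ.le
    have hdα : (d:ℝ) ^ α ≤ (n:ℝ) ^ α :=
      Real.rpow_le_rpow (by positivity) (by exact_mod_cast hdn) hα.le
    have step2 : (Real.log n ^ β / 2 ^ β) / (n:ℝ) ^ α ≤ Real.log d ^ β / (d:ℝ) ^ α :=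
      div_le_div₀ (by positivity) hldβ (by positivity) hdα
    have h2 : (1/2) * ((n:ℝ) ^ α / Real.log n ^ β) ≤ A n := hlo n hnN
    have eqq : C * ((Real.log n ^ β / 2 ^ β) / (n:ℝ) ^ α)
        * ((1/2) * ((n:ℝ) ^ α / Real.log n ^ β)) = C / (2 ^ β * 2) := by
      field_simp
    have hC2 : C0 ≤ C / (2 ^ β * 2) := by
      have e3 : C / (2 ^ β * 2) = (4 * 4 ^ β) / (2 ^ β * 2) + C0 := by
        rw [hCdef]; field_simp
      have : (0:ℝ) ≤ (4 * 4 ^ β) / (2 ^ β * 2) := by positivity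
      linarith
    calc A m ≤ C0 := hAm
    _ ≤ C / (2 ^ β * 2) := hC2
    _ = C * ((Real.log n ^ β / 2 ^ β) / (n:ℝ) ^ α)
        * ((1/2) * ((n:ℝ) ^ α / Real.log n ^ β)) := eqq.symm
    _ ≤ C * (Real.log d ^ β / (d:ℝ) ^ α) * ((1/2) * ((n:ℝ) ^ α / Real.log n ^ β)) := by
        apply mul_le_mul_of_nonneg_right (mul_le_mul_of_nonneg_left step2 hCpos.le)
        positivity
    _ ≤ C * (Real.log d ^ β / (d:ℝ) ^ α) * A n := by
        apply mul_le_mul_of_nonneg_left h2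
        positivity

lemma ratio_tendsto (a : ℕ → ℝ) (α β : ℝ) (hα : 0 < α) (hβ : 0 < β)
    (hA : Tendsto (fun n : ℕ =>
        (∑ k ∈ Finset.Icc 1 n, a k) / ((n : ℝ) ^ α / Real.log n ^ β)) atTop (nhds 1))
    (d : ℕ) (hd : 1 ≤ d) :
    Tendsto (fun n : ℕ => (∑ k ∈ Icc 1 (n / d), a k) / (∑ k ∈ Icc 1 n, a k))
      atTop (nhds ((1 / (d:ℝ)) ^ α)) := by
  set A : ℕ → ℝ := fun n => ∑ k ∈ Icc 1 n, a k with hAdef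
  set R : ℕ → ℝ := fun n => A n / ((n : ℝ) ^ α / Real.log n ^ β) with hRdef
  have hd0 : 0 < d := hd
  have hdR : (0:ℝ) < d := by exact_mod_cast hd0
  -- n / d → ∞
  have h1 : Tendsto (fun n : ℕ => n / d) atTop atTop := by
    apply tendsto_atTop_atTop.2
    intro K
    exact ⟨K * d, fun n hn => (Nat.le_div_iff_mul_le hd0).2 hn⟩
  have hR2 : Tendsto (fun n : ℕ => R (n / d)) atTop (nhds 1) := hA.comp h1
  have hRdivlim : Tendsto (fun n : ℕ => R (n / d) / R n) atTop (nhds 1) := by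
    have := hR2.div hA one_ne_zero
    simpa [Pi.div_def] using this
  -- floor fraction
  have hfrac : Tendsto (fun n : ℕ => ((n / d : ℕ) : ℝ) / (n : ℝ)) atTop (nhds (1 / (d:ℝ))) := by
    apply tendsto_of_tendsto_of_tendsto_of_le_of_le'
      (g := fun n : ℕ => 1 / (d:ℝ) - 1 / (n:ℝ)) (h := fun _ => 1 / (d:ℝ))
    · simpa using (tendsto_const_nhds (x := 1/(d:ℝ))).sub tendsto_one_div_atTop_nhds_zero_nat
    · exact tendsto_const_nhds
    · filter_upwards [eventually_ge_atTop 1] with n hn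
      have hnR : (0:ℝ) < n := by exact_mod_cast hn
      have hlow : (n:ℝ) / d - 1 ≤ ((n / d : ℕ) : ℝ) := by
        have h2 : n < (n / d + 1) * d := by
          have hdm := Nat.div_add_mod n d
          have hr : n % d < d := Nat.mod_lt _ hd0
          calc n = d * (n / d) + n % d := by omega
          _ < d * (n / d) + d := by omega
          _ = (n / d + 1) * d := by ring
        have h2'' : n < (n / d) * d + d := by
          rw [add_mul, one_mul] at h2; omega
        have h2' : (n:ℝ) < ((n / d : ℕ) : ℝ) * d + d := by exact_mod_cast h2''
        rw [div_sub_one (by positivity), div_le_iff₀ (by positivity)]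
        nlinarith
      calc 1 / (d:ℝ) - 1 / (n:ℝ) = ((n:ℝ) / d - 1) / n := by field_simp
      _ ≤ ((n / d : ℕ) : ℝ) / n := by gcongr
    · filter_upwards [eventually_ge_atTop 1] with n hn
      have hnR : (0:ℝ) < n := by exact_mod_cast hn
      have hhigh : ((n / d : ℕ) : ℝ) ≤ (n:ℝ) / d := by
        rw [le_div_iff₀ hdR]
        exact_mod_cast Nat.div_mul_le_self n d
      calc ((n / d : ℕ) : ℝ) / n ≤ ((n:ℝ) / d) / n := by gcongr
      _ = 1 / d := by field_simp
  have hfracα : Tendsto (fun n : ℕ => (((n / d : ℕ) : ℝ) / (n:ℝ)) ^ α) atTop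
      (nhds ((1 / (d:ℝ)) ^ α)) := by
    have hc : ContinuousAt (fun x : ℝ => x ^ α) (1 / (d:ℝ)) :=
      Real.continuousAt_rpow_const _ _ (Or.inl (by positivity))
    exact hc.tendsto.comp hfrac
  -- log ratio
  have hlograt : Tendsto (fun n : ℕ => Real.log n / Real.log ((n / d : ℕ))) atTop (nhds 1) := by
    set c : ℝ := Real.log (2 * d) with hcdef
    have hcn : Tendsto (fun n : ℕ => Real.log n - c) atTop atTop :=
      tendsto_atTop_add_const_right _ (-c)
        (Real.tendsto_log_atTop.comp tendsto_natCast_atTop_atTop)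
    have hub : Tendsto (fun n : ℕ => 1 + c / (Real.log n - c)) atTop (nhds 1) := by
      have := Tendsto.div_atTop (tendsto_const_nhds (x := c)) hcn
      simpa using (tendsto_const_nhds (x := (1:ℝ))).add this
    apply tendsto_of_tendsto_of_tendsto_of_le_of_le' tendsto_const_nhds hub
    · filter_upwards [eventually_ge_atTop (2 * d), h1.eventually (eventually_ge_atTop 2)]
        with n hn hm
      have hmR : (2:ℝ) ≤ ((n / d : ℕ) : ℝ) := by exact_mod_cast hm
      have hLpos : 0 < Real.log ((n / d : ℕ)) := Real.log_pos (by linarith)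
      have hLn : Real.log ((n / d : ℕ)) ≤ Real.log n := by
        apply Real.log_le_log (by linarith)
        exact_mod_cast Nat.div_le_self n d
      exact (one_le_div hLpos).2 hLn
    · filter_upwards [eventually_ge_atTop (2 * d + 1), h1.eventually (eventually_ge_atTop 2)]
        with n hn hm
      have hnR : (0:ℝ) < n := by
        have : (1:ℕ) ≤ n := by omega
        exact_mod_cast lt_of_lt_of_le zero_lt_one (by exact_mod_cast this)
      have hmR : (2:ℝ) ≤ ((n / d : ℕ) : ℝ) := by exact_mod_cast hm
      have hLpos : 0 < Real.log ((n / d : ℕ)) := Real.log_pos (by linarith)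
      have h2dn : (2:ℝ) * d < n := by exact_mod_cast Nat.lt_of_lt_of_le (by omega) (le_refl n)
      have hcpos : 0 < Real.log n - c := by
        rw [hcdef]
        have := Real.log_lt_log (by positivity) h2dn
        linarith
      -- lower bound on log (n/d)
      have hfloor_ge : (n:ℝ) / (2 * d) ≤ ((n / d : ℕ) : ℝ) := by
        have h2 : n < (n / d + 1) * d := by
          have hdm := Nat.div_add_mod n d
          have hr : n % d < d := Nat.mod_lt _ hd0
          calc n = d * (n / d) + n % d := by omega
          _ < d * (n / d) + d := by omega
          _ = (n / d + 1) * d := by ring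
        have h2'' : n < (n / d) * d + d := by
          rw [add_mul, one_mul] at h2; omega
        have h2' : (n:ℝ) < ((n / d : ℕ) : ℝ) * d + d := by exact_mod_cast h2''
        rw [div_le_iff₀ (by positivity)]
        nlinarith
      have hL_ge : Real.log n - c ≤ Real.log ((n / d : ℕ)) := by
        have := Real.log_le_log (by positivity : (0:ℝ) < (n:ℝ) / (2 * d)) hfloor_ge
        rw [Real.log_div (by positivity) (by positivity)] at this
        rw [hcdef]
        linarith
      calc Real.log n / Real.log ((n / d : ℕ)) ≤ Real.log n / (Real.log n - c) := by
            have hnR1 : (1:ℝ) ≤ n := by exact_mod_cast (by omega : 1 ≤ n)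
            exact div_le_div_of_nonneg_left (Real.log_nonneg hnR1) hcpos hL_ge
      _ = 1 + c / (Real.log n - c) := by field_simp; ring
  have hlogβ : Tendsto (fun n : ℕ => (Real.log n / Real.log ((n / d : ℕ))) ^ β) atTop
      (nhds 1) := by
    have hc : ContinuousAt (fun x : ℝ => x ^ β) 1 :=
      Real.continuousAt_rpow_const _ _ (Or.inl one_ne_zero)
    have := hc.tendsto.comp hlograt
    simpa [Real.one_rpow, Function.comp_def] using this
  -- combine
  have hprod : Tendsto (fun n : ℕ => (R (n / d) / R n) * ((((n / d : ℕ) : ℝ) / (n:ℝ)) ^ α)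
      * ((Real.log n / Real.log ((n / d : ℕ))) ^ β)) atTop (nhds ((1 / (d:ℝ)) ^ α)) := by
    have := (hRdivlim.mul hfracα).mul hlogβ
    simpa using this
  apply hprod.congr'
  -- eventual equality
  have hRev : ∀ᶠ n : ℕ in atTop, 1/2 < R n := hA.eventually (eventually_gt_nhds (by norm_num))
  obtain ⟨N₀, hN₀⟩ := eventually_atTop.1 hRev
  filter_upwards [eventually_ge_atTop (max N₀ 3), h1.eventually (eventually_ge_atTop (max N₀ 3))]
    with n hn hm
  set m : ℕ := n / d with hmdef
  have hn3 : 3 ≤ n := le_trans (le_max_right _ _) hn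
  have hm3 : 3 ≤ m := le_trans (le_max_right _ _) hm
  have hnR1 : (1:ℝ) < n := by exact_mod_cast lt_of_lt_of_le (by norm_num) hn3
  have hmR1 : (1:ℝ) < m := by exact_mod_cast lt_of_lt_of_le (by norm_num) hm3
  have hlnpos : 0 < Real.log n := Real.log_pos hnR1
  have hlmpos : 0 < Real.log m := Real.log_pos hmR1
  have hnpos : (0:ℝ) < n := by linarith
  have hmpos : (0:ℝ) < m := by linarith
  have hRn : 1/2 < R n := hN₀ n (le_trans (le_max_left _ _) hn)
  have hAn : A n ≠ 0 := by
    intro h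
    rw [hRdef] at hRn
    simp only [h, zero_div] at hRn
    norm_num at hRn
  have hnα : ((n:ℝ) ^ α) ≠ 0 := by positivity
  have hmα : ((m:ℝ) ^ α) ≠ 0 := by positivity
  have hlnβ : (Real.log n ^ β) ≠ 0 := by positivity
  have hlmβ : (Real.log m ^ β) ≠ 0 := by positivity
  rw [hRdef]
  rw [Real.div_rpow hmpos.le hnpos.le, Real.div_rpow hlnpos.le hlmpos.le]
  simp only [hAdef] at hAn ⊢
  field_simp
/-- Variant of the Wintner-type lemma: if `A(n) ~ n^α/(log n)^β` and
`∑ |b(n)| (log n)^β / n^α < ∞`, then `(1/A(n)) ∑_{k ≤ n} (b*a)(k) → ∑ b(m)/m^α`. -/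
theorem dirichlet_convolution_summatory_limit_log
    (a : ℕ → ℝ) (ha : ∀ n, 0 ≤ a n) (α β : ℝ) (hα : 0 < α) (hβ : 0 < β)
    (hA : Tendsto (fun n : ℕ =>
        (∑ k ∈ Finset.Icc 1 n, a k) / ((n : ℝ) ^ α / Real.log n ^ β)) atTop (nhds 1))
    (b : ℕ → ℝ)
    (hb : Summable (fun n : ℕ =>
        |b (n + 1)| * Real.log (n + 1) ^ β / ((n + 1 : ℝ)) ^ α)) :
    Tendsto (fun n : ℕ =>
        (∑ k ∈ Finset.Icc 1 n, ∑ d ∈ k.divisors, b d * a (k / d)) /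
          (∑ k ∈ Finset.Icc 1 n, a k))
      atTop (nhds (∑' m : ℕ, b (m + 1) / ((m + 1 : ℝ)) ^ α)) := by
  classical
  set A : ℕ → ℝ := fun n => ∑ k ∈ Icc 1 n, a k with hAdef
  set f : ℕ → ℕ → ℝ := fun n j => b (j + 1) * (A (n / (j + 1)) / A n) with hfdef
  have hAnon : ∀ n, 0 ≤ A n := fun n => Finset.sum_nonneg fun i _ => ha i
  -- rewrite the sequence as a tsum
  have hrw : ∀ n : ℕ,
      (∑ k ∈ Finset.Icc 1 n, ∑ d ∈ k.divisors, b d * a (k / d)) / A n = ∑' j, f n j := by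
    intro n
    rw [conv_sum, Finset.sum_div]
    have e1 : ∀ d, (b d * A (n / d)) / A n = b d * (A (n / d) / A n) := fun d =>
      mul_div_assoc _ _ _
    rw [← Finset.Ico_add_one_right_eq_Icc, Finset.sum_Ico_eq_sum_range]
    norm_num
    rw [eq_comm]
    refine (tsum_eq_sum (s := Finset.range n) ?_).trans ?_
    · intro j hj
      rw [Finset.mem_range, not_lt] at hj
      have : n / (j + 1) = 0 := Nat.div_eq_of_lt (by omega)
      rw [hfdef]
      simp [this, hAdef]
    · apply Finset.sum_congr rfl
      intro j _
      rw [hfdef]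
      simp only [add_comm 1 j]
      rw [mul_div_assoc]
  -- pointwise limits
  have hpt : ∀ j : ℕ, Tendsto (fun n => f n j) atTop (nhds (b (j + 1) / ((j + 1 : ℝ)) ^ α)) := by
    intro j
    have h := (ratio_tendsto a α β hα hβ hA (j + 1) (by omega)).const_mul (b (j + 1))
    have e : b (j + 1) * (1 / ((j + 1 : ℕ) : ℝ)) ^ α = b (j + 1) / ((j + 1 : ℝ)) ^ α := by
      rw [Real.div_rpow (by norm_num) (by positivity), Real.one_rpow]
      push_cast
      ring
    rw [e] at h
    exact h
  -- dominating function
  obtain ⟨C, hCpos, N, hN3, hmain⟩ := unif_bound a ha α β hα hβ hA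
  set g : ℕ → ℝ := fun j => |b 1| * (if j = 0 then 1 else 0)
      + C * (|b (j + 1)| * Real.log (j + 1) ^ β / ((j + 1 : ℝ)) ^ α) with hgdef
  have hgsum : Summable g := by
    apply Summable.add
    · apply summable_of_ne_finset_zero (s := {0})
      intro j hj
      simp only [Finset.mem_singleton] at hj
      simp [hj]
    · exact hb.mul_left C
  have hgnonneg : ∀ j, 0 ≤ g j := by
    intro j
    have h1 : (0:ℝ) ≤ |b 1| * (if j = 0 then 1 else 0) := by positivity
    have h2 : (0:ℝ) ≤ C * (|b (j + 1)| * Real.log (j + 1) ^ β / ((j + 1 : ℝ)) ^ α) := by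
      have : (0:ℝ) < (j:ℝ) + 1 := by positivity
      have hl : 0 ≤ Real.log ((j:ℝ) + 1) := Real.log_nonneg (by linarith)
      positivity
    rw [hgdef]
    exact add_nonneg h1 h2
  have h_bound : ∀ᶠ n in atTop, ∀ j, ‖f n j‖ ≤ g j := by
    filter_upwards [eventually_ge_atTop N] with n hn
    obtain ⟨hApos, hbd⟩ := hmain n hn
    intro j
    rcases Nat.eq_zero_or_pos j with rfl | hj
    · have : f n 0 = b 1 * 1 := by
        rw [hfdef]
        simp only [Nat.div_one, zero_add]
        rw [div_self (ne_of_gt hApos)]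
      rw [this, mul_one, Real.norm_eq_abs, hgdef]
      have h2 : (0:ℝ) ≤ C * (|b (0 + 1)| * Real.log (0 + 1) ^ β / ((0 + 1 : ℝ)) ^ α) := by
        norm_num
        positivity
      simp only [if_pos rfl, mul_one]
      norm_num at h2 ⊢
      linarith
    · set d : ℕ := j + 1 with hddef
      have hd2 : 2 ≤ d := by omega
      rcases le_or_gt d n with hdn | hdn
      · have hbound := hbd d hd2 hdn
        have hratio : A (n / d) / A n ≤ C * (Real.log d ^ β / (d:ℝ) ^ α) :=
          (div_le_iff₀ hApos).2 hbound
        have hrnonneg : 0 ≤ A (n / d) / A n := div_nonneg (hAnon _) hApos.le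
        rw [hfdef, Real.norm_eq_abs, abs_mul, abs_of_nonneg hrnonneg]
        have : |b d| * (A (n / d) / A n) ≤ |b d| * (C * (Real.log d ^ β / (d:ℝ) ^ α)) :=
          mul_le_mul_of_nonneg_left hratio (abs_nonneg _)
        apply this.trans
        rw [hgdef]
        have e2 : |b d| * (C * (Real.log d ^ β / (d:ℝ) ^ α))
            = C * (|b (j + 1)| * Real.log ((j:ℝ) + 1) ^ β / ((j + 1 : ℝ)) ^ α) := by
          rw [hddef]
          push_cast
          ring
        rw [e2]
        have h1 : (0:ℝ) ≤ |b 1| * (if j = 0 then 1 else 0) := by positivity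
        simp only [hgdef]
        linarith [le_refl (C * (|b (j + 1)| * Real.log ((j:ℝ) + 1) ^ β / ((j + 1 : ℝ)) ^ α))]
      · have : n / d = 0 := Nat.div_eq_of_lt hdn
        have hf0 : f n j = 0 := by
          rw [hfdef]
          simp [show n / (j + 1) = 0 from this, hAdef]
        rw [hf0, norm_zero]
        exact hgnonneg j
  have hlim := tendsto_tsum_of_dominated_convergence hgsum hpt h_bound
  exact Tendsto.congr (fun n => (hrw n).symm) hlim
end

section
/- Let p > 1, let (X, 𝒜, ν) be a probability space and τ : X → X a measurable ν-preserving map. Let a : ℕ → [0,∞) be a nonnegative arithmetical function whose summatory function satisfies A(n) ~ n^α L(n) for some α > 0 and some positive, non-decreasing, slowly varying L, and let b : ℕ → ℝ satisfy ∑_{n ≥ 1} |b(n)|/n^α < ∞ and (a * b)(n) ≥ 0 for all n. Assume there is C > 0 such that for every integer ℓ ≥ 1 and every f ∈ L^p(ν), ‖ sup_{n ≥ 1} (1/A(n)) |∑_{k=1}^n a(k) · f∘τ^{ℓk}| ‖_{L^p(ν)} ≤ C ‖f‖_{L^p(ν)}. Then there exists C' > 0 such that for every f ∈ L^p(ν),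 ‖ sup_{n ≥ 1} (1/A(n)) |∑_{k=1}^n (a * b)(k) · f∘τ^k| ‖_{L^p(ν)} ≤ C' ‖f‖_{L^p(ν)}. -/
open MeasureTheory Filter Finset
open scoped ENNReal

lemma my_iSup_rpow (u : ℕ → ℝ≥0∞) {q : ℝ} (hq : 0 < q) :
    (⨆ i, u i) ^ q = ⨆ i, (u i) ^ q :=
  (ENNReal.orderIsoRpow q hq).map_iSup u

lemma my_lp_sum_le {X : Type*} [MeasurableSpace X] (ν : Measure X) {p : ℝ} (hp : 1 ≤ p)
    (G : ℕ → X → ℝ≥0∞) (hG : ∀ i, Measurable (G i)) (D : ℕ) :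
    (∫⁻ x, (∑ i ∈ Finset.range D, G i x) ^ p ∂ν) ^ (1/p)
      ≤ ∑ i ∈ Finset.range D, (∫⁻ x, (G i x) ^ p ∂ν) ^ (1/p) := by
  induction D with
  | zero =>
      simp [ENNReal.zero_rpow_of_pos (lt_of_lt_of_le one_pos hp),
        ENNReal.zero_rpow_of_pos (by positivity : (0:ℝ) < 1/p)]
      linarith
  | succ D ih =>
      simp only [Finset.sum_range_succ]
      calc (∫⁻ x, (∑ i ∈ Finset.range D, G i x + G D x) ^ p ∂ν) ^ (1/p)
          ≤ (∫⁻ x, (∑ i ∈ Finset.range D, G i x) ^ p ∂ν) ^ (1/p)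
            + (∫⁻ x, (G D x) ^ p ∂ν) ^ (1/p) :=
            ENNReal.lintegral_Lp_add_le
              (Finset.measurable_sum _ fun i _ => hG i).aemeasurable (hG D).aemeasurable hp
        _ ≤ _ := add_le_add_left ih _

lemma my_minkowski_tsum {X : Type*} [MeasurableSpace X] (ν : Measure X) {p : ℝ} (hp : 1 ≤ p)
    (G : ℕ → X → ℝ≥0∞) (hG : ∀ i, Measurable (G i)) :
    (∫⁻ x, (∑' i, G i x) ^ p ∂ν) ^ (1/p)
      ≤ ∑' i, (∫⁻ x, (G i x) ^ p ∂ν) ^ (1/p) := by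
  have hp0 : 0 < p := lt_of_lt_of_le one_pos hp
  have h1 : ∀ x, (∑' i, G i x) ^ p = ⨆ D, (∑ i ∈ Finset.range D, G i x) ^ p := by
    intro x
    rw [ENNReal.tsum_eq_iSup_nat, my_iSup_rpow _ hp0]
  have hmeas : ∀ D, Measurable fun x => (∑ i ∈ Finset.range D, G i x) ^ p :=
    fun D => (Finset.measurable_sum _ fun i _ => hG i).pow_const _
  have hmono : Monotone fun D => fun x => (∑ i ∈ Finset.range D, G i x) ^ p := by
    intro D D' h x
    exact ENNReal.rpow_le_rpow
      (Finset.sum_le_sum_of_subset (Finset.range_subset_range.2 h)) hp0.le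
  calc (∫⁻ x, (∑' i, G i x) ^ p ∂ν) ^ (1/p)
      = (⨆ D, ∫⁻ x, (∑ i ∈ Finset.range D, G i x) ^ p ∂ν) ^ (1/p) := by
        rw [← lintegral_iSup hmeas hmono]; exact congrArg (· ^ (1/p)) (lintegral_congr h1)
    _ = ⨆ D, (∫⁻ x, (∑ i ∈ Finset.range D, G i x) ^ p ∂ν) ^ (1/p) :=
        my_iSup_rpow _ (by positivity)
    _ ≤ ⨆ D, ∑ i ∈ Finset.range D, (∫⁻ x, (G i x) ^ p ∂ν) ^ (1/p) :=
        iSup_mono fun D => my_lp_sum_le ν hp G hG D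
    _ ≤ ∑' i, (∫⁻ x, (G i x) ^ p ∂ν) ^ (1/p) :=
        iSup_le fun D => ENNReal.sum_le_tsum _

lemma my_sum_swap (a b : ℕ → ℝ) (g : ℕ → ℝ) (n : ℕ) :
    ∑ k ∈ Icc 1 n, (∑ d ∈ k.divisors, a d * b (k / d)) * g k
      = ∑ d ∈ Icc 1 n, b d * ∑ m ∈ Icc 1 (n / d), a m * g (d * m) := by
  have lhs : ∑ k ∈ Icc 1 n, (∑ d ∈ k.divisors, a d * b (k / d)) * g k
      = ∑ k ∈ Icc 1 n, ∑ d ∈ k.divisors, a d * b (k / d) * g k := by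
    refine Finset.sum_congr rfl fun k _ => ?_
    rw [Finset.sum_mul]
  have rhs : ∑ d ∈ Icc 1 n, b d * ∑ m ∈ Icc 1 (n / d), a m * g (d * m)
      = ∑ d ∈ Icc 1 n, ∑ m ∈ Icc 1 (n / d), a m * b d * g (d * m) := by
    refine Finset.sum_congr rfl fun d _ => ?_
    rw [Finset.mul_sum]
    refine Finset.sum_congr rfl fun m _ => ?_
    ring
  rw [lhs, rhs, Finset.sum_sigma', Finset.sum_sigma']
  refine Finset.sum_nbij' (fun q => ⟨q.1 / q.2, q.2⟩) (fun q => ⟨q.1 * q.2, q.2⟩)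
    ?_ ?_ ?_ ?_ ?_
  · rintro ⟨k, d⟩ hq
    simp only [Finset.mem_sigma, Finset.mem_Icc, Nat.mem_divisors] at hq ⊢
    obtain ⟨⟨hk1, hkn⟩, hdvd, hk0⟩ := hq
    have hd1 : 1 ≤ d := Nat.pos_of_dvd_of_pos hdvd (by omega)
    have hdk : d ≤ k := Nat.le_of_dvd (by omega) hdvd
    have he1 : 1 ≤ k / d := (Nat.one_le_div_iff (by omega)).2 hdk
    have hek : k / d ≤ k := Nat.div_le_self _ _
    refine ⟨⟨he1, le_trans hek hkn⟩, hd1, ?_⟩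
    rw [Nat.le_div_iff_mul_le (by omega), Nat.mul_div_cancel' hdvd]
    omega
  · rintro ⟨d, m⟩ hq
    simp only [Finset.mem_sigma, Finset.mem_Icc, Nat.mem_divisors] at hq ⊢
    obtain ⟨⟨hd1, hdn⟩, hm1, hmn⟩ := hq
    have hdm : m * d ≤ n := (Nat.le_div_iff_mul_le (by omega)).1 hmn
    have : d * m = m * d := mul_comm d m
    refine ⟨⟨?_, by omega⟩, ⟨d, by ring⟩, by positivity⟩
    exact Nat.one_le_iff_ne_zero.2 (by positivity)
  · rintro ⟨k, d⟩ hq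
    simp only [Finset.mem_sigma, Nat.mem_divisors] at hq
    obtain ⟨_, hdvd, hk0⟩ := hq
    simp [Nat.div_mul_cancel hdvd]
  · rintro ⟨d, m⟩ hq
    simp only [Finset.mem_sigma, Finset.mem_Icc] at hq
    obtain ⟨⟨hd1, _⟩, hm1, _⟩ := hq
    simp [Nat.mul_div_cancel _ (by omega : 0 < m)]
  · rintro ⟨k, d⟩ hq
    simp only [Finset.mem_sigma, Nat.mem_divisors] at hq
    obtain ⟨_, hdvd, hk0⟩ := hq
    rw [Nat.div_mul_cancel hdvd]

lemma my_const (a : ℕ → ℝ) (ha : ∀ n, 0 ≤ a n) (α : ℝ) (hα : 0 < α)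
    (L : ℝ → ℝ) (hLpos : ∀ x : ℝ, 0 ≤ x → 0 < L x)
    (hLmono : MonotoneOn L (Set.Ici (0 : ℝ)))
    (hA : Tendsto (fun n : ℕ =>
        (∑ k ∈ Finset.Icc 1 n, a k) / ((n : ℝ) ^ α * L n)) atTop (nhds 1)) :
    ∃ K₀ : ℝ, 0 < K₀ ∧ ∀ n d : ℕ, 1 ≤ d → d ≤ n →
      (∑ k ∈ Icc 1 (n / d), a k) * (d : ℝ) ^ α ≤ K₀ * ∑ k ∈ Icc 1 n, a k := by
  set A : ℕ → ℝ := fun n => ∑ k ∈ Icc 1 n, a k with hAdef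
  have hAmono : ∀ {m n : ℕ}, m ≤ n → A m ≤ A n := fun {m n} h =>
    Finset.sum_le_sum_of_subset_of_nonneg (Finset.Icc_subset_Icc_right h)
      (fun i _ _ => ha i)
  have hAnonneg : ∀ n, 0 ≤ A n := fun n => Finset.sum_nonneg fun i _ => ha i
  have hdenpos : ∀ n : ℕ, 1 ≤ n → 0 < ((n : ℝ) ^ α * L n) := by
    intro n hn
    have h1 : (0:ℝ) < (n:ℝ) := by exact_mod_cast hn
    exact mul_pos (Real.rpow_pos_of_pos h1 α) (hLpos _ h1.le)
  have h2 : ∀ᶠ n : ℕ in atTop, A n / ((n : ℝ) ^ α * L n) ≤ 2 :=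
    hA.eventually (eventually_le_nhds (by norm_num))
  have h12 : ∀ᶠ n : ℕ in atTop, (1/2 : ℝ) ≤ A n / ((n : ℝ) ^ α * L n) :=
    hA.eventually (eventually_ge_nhds (by norm_num))
  obtain ⟨N₀, hN₀⟩ := (h2.and h12).exists_forall_of_atTop
  set N₁ : ℕ := max N₀ 1 with hN₁def
  have hN₁1 : 1 ≤ N₁ := le_max_right _ _
  have hL1pos : 0 < L 1 := hLpos 1 one_pos.le
  set K₁ : ℝ := 2 + A N₁ / L 1 with hK₁def
  have hK₁2 : (2:ℝ) ≤ K₁ := by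
    have : 0 ≤ A N₁ / L 1 := div_nonneg (hAnonneg _) hL1pos.le
    rw [hK₁def]; linarith
  -- upper bound: A m ≤ K₁ * (m^α * L m) for all m ≥ 1
  have hupper : ∀ m : ℕ, 1 ≤ m → A m ≤ K₁ * ((m : ℝ) ^ α * L m) := by
    intro m hm
    have hm1 : (1:ℝ) ≤ (m:ℝ) := by exact_mod_cast hm
    have hden := hdenpos m hm
    by_cases hc : N₀ ≤ m
    · have := (hN₀ m hc).1
      have h' : A m ≤ 2 * ((m : ℝ) ^ α * L m) := by
        rw [div_le_iff₀ hden] at this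
        linarith
      calc A m ≤ 2 * ((m : ℝ) ^ α * L m) := h'
        _ ≤ K₁ * ((m : ℝ) ^ α * L m) := by
          apply mul_le_mul_of_nonneg_right hK₁2 hden.le
    · have hmN : m ≤ N₁ := le_trans (le_of_not_ge hc) (le_max_left _ _)
      have h1 : A m ≤ A N₁ := hAmono hmN
      have h2 : L 1 ≤ (m : ℝ) ^ α * L m := by
        have hrp : (1:ℝ) ≤ (m:ℝ) ^ α := Real.one_le_rpow hm1 hα.le
        have hLm : L 1 ≤ L m := hLmono (Set.mem_Ici.2 one_pos.le)
          (Set.mem_Ici.2 (by positivity)) hm1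
        nlinarith [hLpos (m:ℝ) (by positivity)]
      calc A m ≤ (A N₁ / L 1) * L 1 := by
            rw [div_mul_cancel₀ _ hL1pos.ne']; exact h1
        _ ≤ (A N₁ / L 1) * ((m : ℝ) ^ α * L m) := by
            apply mul_le_mul_of_nonneg_left h2 (div_nonneg (hAnonneg _) hL1pos.le)
        _ ≤ K₁ * ((m : ℝ) ^ α * L m) := by
            apply mul_le_mul_of_nonneg_right _ hden.le
            linarith
  refine ⟨2 * K₁ + (N₁ : ℝ) ^ α, by positivity, ?_⟩
  intro n d hd hdn
  have hn1 : 1 ≤ n := le_trans hd hdn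
  have hnd1 : 1 ≤ n / d := (Nat.one_le_div_iff (by omega)).2 hdn
  have hd0 : (0:ℝ) < (d:ℝ) := by exact_mod_cast hd
  have hdα : (0:ℝ) < (d:ℝ) ^ α := Real.rpow_pos_of_pos hd0 α
  by_cases hc : N₁ ≤ n
  · -- large n
    have hlow := (hN₀ n (le_trans (le_max_left _ _) hc)).2
    have hden := hdenpos n hn1
    have hAnlow : (1/2 : ℝ) * ((n : ℝ) ^ α * L n) ≤ A n :=
      (le_div_iff₀ hden).1 hlow
    have hup := hupper (n / d) hnd1
    have hcast : ((n / d : ℕ) : ℝ) ≤ (n : ℝ) / (d : ℝ) := Nat.cast_div_le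
    have hndnonneg : (0:ℝ) ≤ ((n / d : ℕ) : ℝ) := Nat.cast_nonneg _
    have hrpow : ((n / d : ℕ) : ℝ) ^ α ≤ ((n : ℝ) / (d : ℝ)) ^ α :=
      Real.rpow_le_rpow hndnonneg hcast hα.le
    have hLle : L ((n / d : ℕ) : ℝ) ≤ L (n : ℝ) := hLmono (Set.mem_Ici.2 hndnonneg)
      (Set.mem_Ici.2 (Nat.cast_nonneg _)) (by exact_mod_cast Nat.div_le_self n d)
    have hLndpos : 0 < L ((n / d : ℕ) : ℝ) := hLpos _ hndnonneg
    have key : A (n / d) * (d : ℝ) ^ α ≤ K₁ * ((n : ℝ) ^ α * L n) := by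
      have h1 : A (n / d) * (d : ℝ) ^ α
          ≤ K₁ * (((n : ℝ) / (d : ℝ)) ^ α * L n) * (d : ℝ) ^ α := by
        apply mul_le_mul_of_nonneg_right _ hdα.le
        calc A (n/d) ≤ K₁ * (((n / d : ℕ) : ℝ) ^ α * L ((n / d : ℕ) : ℝ)) := hup
          _ ≤ K₁ * (((n : ℝ) / (d : ℝ)) ^ α * L n) := by
              apply mul_le_mul_of_nonneg_left _ (by linarith : (0:ℝ) ≤ K₁)
              apply mul_le_mul hrpow hLle hLndpos.le (by positivity)
      have h2 : ((n : ℝ) / (d : ℝ)) ^ α * (d : ℝ) ^ α = (n : ℝ) ^ α := by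
        rw [Real.div_rpow (Nat.cast_nonneg n) hd0.le, div_mul_cancel₀ _ hdα.ne']
      calc A (n / d) * (d : ℝ) ^ α
          ≤ K₁ * (((n : ℝ) / (d : ℝ)) ^ α * L n) * (d : ℝ) ^ α := h1
        _ = K₁ * ((n : ℝ) ^ α * L n) := by
            rw [mul_assoc]
            congr 1
            rw [show ((n:ℝ)/(d:ℝ))^α * L (n:ℝ) * (d:ℝ)^α
              = ((n:ℝ)/(d:ℝ))^α * (d:ℝ)^α * L (n:ℝ) from by ring, h2]
    calc A (n / d) * (d : ℝ) ^ α ≤ K₁ * ((n : ℝ) ^ α * L n) := key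
      _ ≤ 2 * K₁ * A n := by nlinarith [hAnlow, hK₁2]
      _ ≤ (2 * K₁ + (N₁ : ℝ) ^ α) * A n := by
          apply mul_le_mul_of_nonneg_right _ (hAnonneg n)
          have : (0:ℝ) ≤ (N₁ : ℝ) ^ α := by positivity
          linarith
  · -- small n
    have hdN : (d : ℝ) ≤ (N₁ : ℝ) := by exact_mod_cast le_trans hdn (by omega)
    have hdαN : (d : ℝ) ^ α ≤ (N₁ : ℝ) ^ α := Real.rpow_le_rpow hd0.le hdN hα.le
    calc A (n / d) * (d : ℝ) ^ α ≤ A n * (N₁ : ℝ) ^ α :=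
        mul_le_mul (hAmono (Nat.div_le_self n d)) hdαN hdα.le (hAnonneg n)
      _ ≤ (2 * K₁ + (N₁ : ℝ) ^ α) * A n := by nlinarith [hAnonneg n, hK₁2]
/-- Stability of the dominated ergodic theorem under Dirichlet convolution: if the weights
`a(n)` satisfy a maximal inequality along every power `τ^ℓ` and `∑ |b(n)|/n^α < ∞` with
`a*b ≥ 0`, then `a*b` satisfies the dominated ergodic theorem (normalized by `A(n)`). -/
theorem dirichlet_convolution_dominated_ergodic (p : ℝ) (hp : 1 < p)
    {X : Type*} [MeasurableSpace X] (ν : Measure X) [IsProbabilityMeasure ν]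
    (τ : X → X) (hτ : MeasurePreserving τ ν ν)
    (a : ℕ → ℝ) (ha : ∀ n, 0 ≤ a n) (α : ℝ) (hα : 0 < α)
    (L : ℝ → ℝ) (hLpos : ∀ x : ℝ, 0 ≤ x → 0 < L x)
    (hLmono : MonotoneOn L (Set.Ici (0 : ℝ)))
    (hLslow : ∀ K : ℝ, 0 < K →
      Tendsto (fun x : ℝ => L (K * x) / L x) atTop (nhds 1))
    (hA : Tendsto (fun n : ℕ =>
        (∑ k ∈ Finset.Icc 1 n, a k) / ((n : ℝ) ^ α * L n)) atTop (nhds 1))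
    (b : ℕ → ℝ)
    (hb : Summable (fun n : ℕ => |b (n + 1)| / ((n + 1 : ℝ)) ^ α))
    (hab : ∀ n : ℕ, 0 ≤ ∑ d ∈ n.divisors, a d * b (n / d))
    (C : ℝ) (hC : 0 < C)
    (hmax : ∀ ℓ : ℕ, 1 ≤ ℓ → ∀ f : X → ℝ, MemLp f (ENNReal.ofReal p) ν →
      (∫⁻ x, (⨆ n : ℕ, ⨆ _ : 1 ≤ n,
          ENNReal.ofReal
            (|∑ k ∈ Finset.Icc 1 n, a k * f (τ^[ℓ * k] x)| /
              ∑ k ∈ Finset.Icc 1 n, a k)) ^ p ∂ν) ^ (1 / p)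
        ≤ ENNReal.ofReal C * eLpNorm f (ENNReal.ofReal p) ν) :
    ∃ C' : ℝ, 0 < C' ∧
      ∀ f : X → ℝ, MemLp f (ENNReal.ofReal p) ν →
        (∫⁻ x, (⨆ n : ℕ, ⨆ _ : 1 ≤ n,
            ENNReal.ofReal
              (|∑ k ∈ Finset.Icc 1 n,
                  (∑ d ∈ k.divisors, a d * b (k / d)) * f (τ^[k] x)| /
                ∑ k ∈ Finset.Icc 1 n, a k)) ^ p ∂ν) ^ (1 / p)
          ≤ ENNReal.ofReal C' * eLpNorm f (ENNReal.ofReal p) ν := by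
  classical
  have hp0 : (0:ℝ) < p := lt_trans one_pos hp
  obtain ⟨K₀, hK₀pos, hK₀⟩ := my_const a ha α hα L hLpos hLmono hA
  set A : ℕ → ℝ := fun n => ∑ k ∈ Finset.Icc 1 n, a k with hAdef
  have hAnonneg : ∀ n, 0 ≤ A n := fun n => Finset.sum_nonneg fun i _ => ha i
  -- the summable coefficient sequence
  set c : ℕ → ℝ := fun d => K₀ * |b d| / (d : ℝ) ^ α with hcdef
  have hcnonneg : ∀ d, 0 ≤ c d := by
    intro d
    apply div_nonneg (mul_nonneg hK₀pos.le (abs_nonneg _)) (by positivity)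
  have hcsum : Summable (fun i : ℕ => c (i + 1) * C) := by
    have : (fun i : ℕ => c (i + 1) * C)
        = fun i : ℕ => (K₀ * C) * (|b (i + 1)| / ((i : ℝ) + 1) ^ α) := by
      funext i
      have : ((i + 1 : ℕ) : ℝ) = (i : ℝ) + 1 := by push_cast; ring
      simp only [hcdef, this]
      ring
    rw [this]
    exact hb.mul_left (K₀ * C)
  set S : ℝ := ∑' i : ℕ, c (i + 1) * C with hSdef
  have hSnonneg : 0 ≤ S := tsum_nonneg fun i => mul_nonneg (hcnonneg _) hC.le
  refine ⟨S + 1, by linarith, ?_⟩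
  intro f hf
  -- measurable representative
  set g : X → ℝ := hf.1.mk f with hgdef
  have hgsm : StronglyMeasurable g := hf.1.stronglyMeasurable_mk
  have hgm : Measurable g := hgsm.measurable
  have hfg : f =ᵐ[ν] g := hf.1.ae_eq_mk
  have hg : MemLp g (ENNReal.ofReal p) ν := hf.ae_eq hfg
  have heq : eLpNorm f (ENNReal.ofReal p) ν = eLpNorm g (ENNReal.ofReal p) ν :=
    eLpNorm_congr_ae hfg
  have hae : ∀ᵐ x ∂ν, ∀ k : ℕ, f (τ^[k] x) = g (τ^[k] x) := by
    rw [MeasureTheory.ae_all_iff]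
    intro k
    exact ae_eq_comp ((hτ.iterate k).measurable.aemeasurable)
      (by rw [(hτ.iterate k).map_eq]; exact hfg)
  -- maximal functions for g
  set M : ℕ → X → ℝ≥0∞ := fun d x => ⨆ n : ℕ, ⨆ _ : 1 ≤ n,
    ENNReal.ofReal
      (|∑ k ∈ Finset.Icc 1 n, a k * g (τ^[d * k] x)| / A n) with hMdef
  have hMmeas : ∀ d, Measurable (M d) := by
    intro d
    apply Measurable.iSup
    intro n
    apply Measurable.iSup
    intro _
    apply Measurable.ennreal_ofReal
    apply Measurable.div_const
    apply Measurable.abs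
    apply Finset.measurable_sum
    intro k _
    exact (hgm.comp (hτ.measurable.iterate _)).const_mul _
  set G : ℕ → X → ℝ≥0∞ := fun i x => ENNReal.ofReal (c (i + 1)) * M (i + 1) x
    with hGdef
  have hGmeas : ∀ i, Measurable (G i) := fun i => (hMmeas (i + 1)).const_mul _
  -- pointwise bound
  have key : ∀ x : X, ∀ n : ℕ, 1 ≤ n →
      ENNReal.ofReal
        (|∑ k ∈ Finset.Icc 1 n,
            (∑ d ∈ k.divisors, a d * b (k / d)) * g (τ^[k] x)| / A n)
        ≤ ∑' i : ℕ, G i x := by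
    intro x n hn
    by_cases hAn : A n = 0
    · simp [hAn, div_zero]
    have hAnpos : 0 < A n := lt_of_le_of_ne (hAnonneg n) (Ne.symm hAn)
    rw [my_sum_swap a b (fun k => g (τ^[k] x)) n]
    have step1 : |∑ d ∈ Finset.Icc 1 n, b d * ∑ m ∈ Finset.Icc 1 (n / d),
          a m * g (τ^[d * m] x)| / A n
        ≤ ∑ d ∈ Finset.Icc 1 n, |b d| * |∑ m ∈ Finset.Icc 1 (n / d),
            a m * g (τ^[d * m] x)| / A n := by
      rw [← Finset.sum_div]
      refine div_le_div_of_nonneg_right ?_ hAnpos.le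
      calc |∑ d ∈ Finset.Icc 1 n, b d * ∑ m ∈ Finset.Icc 1 (n / d),
              a m * g (τ^[d * m] x)|
          ≤ ∑ d ∈ Finset.Icc 1 n, |b d * ∑ m ∈ Finset.Icc 1 (n / d),
              a m * g (τ^[d * m] x)| := Finset.abs_sum_le_sum_abs _ _
        _ = ∑ d ∈ Finset.Icc 1 n, |b d| * |∑ m ∈ Finset.Icc 1 (n / d),
              a m * g (τ^[d * m] x)| := by
            exact Finset.sum_congr rfl fun d _ => abs_mul _ _
    calc ENNReal.ofReal (|∑ d ∈ Finset.Icc 1 n, b d * ∑ m ∈ Finset.Icc 1 (n / d),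
            a m * g (τ^[d * m] x)| / A n)
        ≤ ENNReal.ofReal (∑ d ∈ Finset.Icc 1 n, |b d| * |∑ m ∈ Finset.Icc 1 (n / d),
            a m * g (τ^[d * m] x)| / A n) := ENNReal.ofReal_le_ofReal step1
      _ = ∑ d ∈ Finset.Icc 1 n, ENNReal.ofReal (|b d| * |∑ m ∈ Finset.Icc 1 (n / d),
            a m * g (τ^[d * m] x)| / A n) := by
          rw [ENNReal.ofReal_sum_of_nonneg]
          intro d _
          positivity
      _ = ∑ i ∈ Finset.range n, ENNReal.ofReal (|b (1 + i)| *
            |∑ m ∈ Finset.Icc 1 (n / (1 + i)), a m * g (τ^[(1 + i) * m] x)| / A n) := by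
          rw [show Finset.Icc 1 n = Finset.Ico 1 (n + 1) from (Finset.Ico_add_one_right_eq_Icc 1 n),
            Finset.sum_Ico_eq_sum_range]
          simp only [Nat.add_sub_cancel]
      _ ≤ ∑ i ∈ Finset.range n, G i x := by
          apply Finset.sum_le_sum
          intro i hi
          have hi1 : 1 ≤ 1 + i := by omega
          have hin : 1 + i ≤ n := by
            simp only [Finset.mem_range] at hi; omega
          have hd1i : (1 + i) = i + 1 := by omega
          set d : ℕ := 1 + i with hddef
          set I : ℝ := |∑ m ∈ Finset.Icc 1 (n / d), a m * g (τ^[d * m] x)| with hIdef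
          have hInonneg : 0 ≤ I := abs_nonneg _
          have hreal : |b d| * I / A n ≤ c d * (I / A (n / d)) := by
            by_cases hnd : A (n / d) = 0
            · have hI0 : I = 0 := by
                rw [hIdef, abs_eq_zero]
                apply Finset.sum_eq_zero
                intro m hm
                have : a m = 0 := by
                  have := (Finset.sum_eq_zero_iff_of_nonneg
                    (fun i _ => ha i)).1 hnd m hm
                  exact this
                rw [this, zero_mul]
              rw [hI0]
              simp [hcnonneg d]
            · have hndpos : 0 < A (n / d) := lt_of_le_of_ne (hAnonneg _) (Ne.symm hnd)
              have hdα : (0:ℝ) < (d : ℝ) ^ α := by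
                apply Real.rpow_pos_of_pos
                exact_mod_cast hi1
              have hKbd := hK₀ n d hi1 hin
              have hrw : c d * (I / A (n / d))
                  = K₀ * |b d| * I / ((d : ℝ) ^ α * A (n / d)) := by
                rw [hcdef]; ring
              rw [hrw, div_le_div_iff₀ hAnpos (by positivity)]
              nlinarith [mul_nonneg (abs_nonneg (b d)) hInonneg, hKbd]
          calc ENNReal.ofReal (|b d| * I / A n)
              ≤ ENNReal.ofReal (c d * (I / A (n / d))) := ENNReal.ofReal_le_ofReal hreal
            _ = ENNReal.ofReal (c d) * ENNReal.ofReal (I / A (n / d)) :=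
                ENNReal.ofReal_mul (hcnonneg d)
            _ ≤ ENNReal.ofReal (c d) * M d x := by
                apply mul_le_mul_right
                rw [hMdef]
                have hnd1 : 1 ≤ n / d := (Nat.one_le_div_iff (by omega)).2 hin
                exact le_iSup₂_of_le (n / d) hnd1 le_rfl
            _ = G i x := by rw [hGdef]; simp only [← hd1i]
      _ ≤ ∑' i : ℕ, G i x := ENNReal.sum_le_tsum _
  -- L^p estimate for g
  have hGlp : ∀ i : ℕ, (∫⁻ x, (G i x) ^ p ∂ν) ^ (1/p)
      ≤ ENNReal.ofReal (c (i + 1) * C) * eLpNorm g (ENNReal.ofReal p) ν := by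
    intro i
    have h1 : ∀ x, (G i x) ^ p
        = ENNReal.ofReal (c (i + 1)) ^ p * (M (i + 1) x) ^ p := by
      intro x
      rw [hGdef]
      exact ENNReal.mul_rpow_of_nonneg _ _ hp0.le
    have h2 : (∫⁻ x, (G i x) ^ p ∂ν)
        = ENNReal.ofReal (c (i + 1)) ^ p * ∫⁻ x, (M (i + 1) x) ^ p ∂ν := by
      simp only [h1]
      exact lintegral_const_mul _ ((hMmeas (i + 1)).pow_const _)
    rw [h2, ENNReal.mul_rpow_of_nonneg _ _ (by positivity : (0:ℝ) ≤ 1/p),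
      ← ENNReal.rpow_mul, mul_one_div_cancel hp0.ne', ENNReal.rpow_one]
    calc ENNReal.ofReal (c (i + 1)) * (∫⁻ x, (M (i + 1) x) ^ p ∂ν) ^ (1/p)
        ≤ ENNReal.ofReal (c (i + 1)) *
            (ENNReal.ofReal C * eLpNorm g (ENNReal.ofReal p) ν) := by
          apply mul_le_mul_right
          exact hmax (i + 1) (by omega) g hg
      _ = ENNReal.ofReal (c (i + 1) * C) * eLpNorm g (ENNReal.ofReal p) ν := by
          rw [ENNReal.ofReal_mul (hcnonneg _), mul_assoc]
  -- transfer LHS from f to g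
  have hLHS : (∫⁻ x, (⨆ n : ℕ, ⨆ _ : 1 ≤ n,
        ENNReal.ofReal
          (|∑ k ∈ Finset.Icc 1 n,
              (∑ d ∈ k.divisors, a d * b (k / d)) * f (τ^[k] x)| / A n)) ^ p ∂ν)
      = ∫⁻ x, (⨆ n : ℕ, ⨆ _ : 1 ≤ n,
        ENNReal.ofReal
          (|∑ k ∈ Finset.Icc 1 n,
              (∑ d ∈ k.divisors, a d * b (k / d)) * g (τ^[k] x)| / A n)) ^ p ∂ν := by
    apply lintegral_congr_ae
    filter_upwards [hae] with x hx
    simp only [hx]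
  rw [hLHS, heq]
  -- main chain
  calc (∫⁻ x, (⨆ n : ℕ, ⨆ _ : 1 ≤ n,
        ENNReal.ofReal
          (|∑ k ∈ Finset.Icc 1 n,
              (∑ d ∈ k.divisors, a d * b (k / d)) * g (τ^[k] x)| / A n)) ^ p ∂ν) ^ (1/p)
      ≤ (∫⁻ x, (∑' i : ℕ, G i x) ^ p ∂ν) ^ (1/p) := by
        apply ENNReal.rpow_le_rpow _ (by positivity : (0:ℝ) ≤ 1/p)
        apply lintegral_mono
        intro x
        apply ENNReal.rpow_le_rpow _ hp0.le
        exact iSup₂_le fun n hn => key x n hn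
    _ ≤ ∑' i : ℕ, (∫⁻ x, (G i x) ^ p ∂ν) ^ (1/p) :=
        my_minkowski_tsum ν hp.le G hGmeas
    _ ≤ ∑' i : ℕ, ENNReal.ofReal (c (i + 1) * C) * eLpNorm g (ENNReal.ofReal p) ν :=
        ENNReal.tsum_le_tsum hGlp
    _ = (∑' i : ℕ, ENNReal.ofReal (c (i + 1) * C)) * eLpNorm g (ENNReal.ofReal p) ν :=
        ENNReal.tsum_mul_right
    _ ≤ ENNReal.ofReal (S + 1) * eLpNorm g (ENNReal.ofReal p) ν := by
        apply mul_le_mul_left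
        rw [← ENNReal.ofReal_tsum_of_nonneg
          (fun i => mul_nonneg (hcnonneg _) hC.le) hcsum]
        exact ENNReal.ofReal_le_ofReal (by rw [hSdef]; linarith)
end

section
/- For every p > 1 and every function g : ℤ → ℝ with ∑_{i ∈ ℤ} |g(i)|^p < ∞, the two-sided Cesàro maximal inequality holds: ∑_{i ∈ ℤ} sup_{j ≥ i} ( (1/(j − i + 1)) |∑_{l=i}^{j} g(l)| )^p ≤ (p/(p−1))^p ∑_{i ∈ ℤ} |g(i)|^p. -/
open Finset

namespace CesaroAux

open MeasureTheory Set
open scoped ENNReal NNReal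

/-- Average of `g` over `Icc i j`. -/
noncomputable def avg (g : ℤ → ℝ) (i j : ℤ) : ℝ :=
  (1 / ((j : ℝ) - i + 1)) * ∑ l ∈ Finset.Icc i j, g l

/-- Truncated maximal function: sup of averages over windows of length at most `n+1`. -/
noncomputable def Mx (g : ℤ → ℝ) (n : ℕ) (i : ℤ) : ℝ≥0∞ :=
  ⨆ j : ℤ, ⨆ _ : i ≤ j ∧ j ≤ i + n, ENNReal.ofReal (avg g i j)

lemma Icc_eq_Ico (i j : ℤ) : Finset.Icc i j = Finset.Ico i (j + 1) := by
  ext x; simp [Int.lt_add_one_iff]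

lemma le_Mx (g : ℤ → ℝ) (n : ℕ) {i j : ℤ} (h1 : i ≤ j) (h2 : j ≤ i + n) :
    ENNReal.ofReal (avg g i j) ≤ Mx g n i := by
  refine le_iSup₂_of_le j ⟨h1, h2⟩ le_rfl

lemma Mx_mono (g : ℤ → ℝ) (i : ℤ) : Monotone (fun n => Mx g n i) := by
  intro n m hnm
  refine iSup₂_le fun j ⟨h1, h2⟩ => le_Mx g m h1 (h2.trans (by exact_mod_cast add_le_add_right (by exact_mod_cast hnm) i))

lemma avg_nonneg {g : ℤ → ℝ} (hg0 : ∀ i, 0 ≤ g i) {i j : ℤ} (hij : i ≤ j) :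
    0 ≤ avg g i j := by
  have h1 : (0:ℝ) < (j : ℝ) - i + 1 := by
    have : (i:ℝ) ≤ j := by exact_mod_cast hij
    linarith
  exact mul_nonneg (by positivity) (Finset.sum_nonneg fun l _ => hg0 l)

lemma avg_rpow_le {p : ℝ} (hp : 1 ≤ p) {g : ℤ → ℝ} (hg0 : ∀ i, 0 ≤ g i) {i j : ℤ}
    (hij : i ≤ j) : avg g i j ^ p ≤ ∑ l ∈ Finset.Icc i j, g l ^ p := by
  set N : ℝ := (j : ℝ) - i + 1 with hN
  have hNpos : 0 < N := by
    have : (i:ℝ) ≤ j := by exact_mod_cast hij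
    simp only [hN]; linarith
  have hcard : ((Finset.Icc i j).card : ℝ) = N := by
    have h1 : (0:ℤ) ≤ j + 1 - i := by omega
    rw [Int.card_Icc, ← Int.cast_natCast (R := ℝ), Int.toNat_of_nonneg h1]
    push_cast
    simp only [hN]; ring
  have key := Real.rpow_arith_mean_le_arith_mean_rpow (Finset.Icc i j)
    (fun _ => 1 / N) g (fun _ _ => by positivity)
    (by rw [Finset.sum_const, nsmul_eq_mul, hcard]; field_simp)
    (fun l _ => hg0 l) hp
  have h1 : ∑ l ∈ Finset.Icc i j, (1 / N) * g l = avg g i j := by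
    rw [avg, Finset.mul_sum]
  rw [h1] at key
  refine key.trans (Finset.sum_le_sum fun l _ => ?_)
  have : 1 / N ≤ 1 := by
    rw [div_le_one hNpos]
    have : (i:ℝ) ≤ j := by exact_mod_cast hij
    simp only [hN]; linarith
  nlinarith [Real.rpow_nonneg (hg0 l) p]

lemma iSup_rpow {ι : Sort*} (f : ι → ℝ≥0∞) {p : ℝ} (hp : 0 < p) :
    (⨆ i, f i) ^ p = ⨆ i, f i ^ p := by
  rcases isEmpty_or_nonempty ι with h | h
  · simp [iSup_of_empty, ENNReal.zero_rpow_of_pos hp]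
  · refine le_antisymm ?_ (iSup_le fun i => ENNReal.rpow_le_rpow (le_iSup f i) hp.le)
    have h1 : ⨆ i, f i ≤ (⨆ i, f i ^ p) ^ (1/p) := by
      refine iSup_le fun i => ?_
      have : f i = (f i ^ p) ^ (1/p) := by
        rw [← ENNReal.rpow_mul, mul_one_div_cancel hp.ne', ENNReal.rpow_one]
      rw [this]
      exact ENNReal.rpow_le_rpow (le_iSup (fun i => f i ^ p) i) (by positivity)
    calc (⨆ i, f i) ^ p ≤ ((⨆ i, f i ^ p) ^ (1/p)) ^ p := ENNReal.rpow_le_rpow h1 hp.le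
      _ = ⨆ i, f i ^ p := by
        rw [← ENNReal.rpow_mul, one_div_mul_cancel hp.ne', ENNReal.rpow_one]

lemma Mx_rpow_le {p : ℝ} (hp : 1 ≤ p) {g : ℤ → ℝ} (hg0 : ∀ i, 0 ≤ g i) (n : ℕ) (i : ℤ) :
    Mx g n i ^ p ≤ ∑ l ∈ Finset.Icc i (i + n), ENNReal.ofReal (g l ^ p) := by
  have hp0 : (0:ℝ) < p := lt_of_lt_of_le one_pos hp
  rw [Mx, iSup_rpow _ hp0]
  refine iSup_le fun j => ?_
  rw [iSup_rpow _ hp0]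
  refine iSup_le fun ⟨h1, h2⟩ => ?_
  rw [ENNReal.ofReal_rpow_of_nonneg (avg_nonneg hg0 h1) hp0.le]
  calc ENNReal.ofReal (avg g i j ^ p) ≤ ENNReal.ofReal (∑ l ∈ Finset.Icc i j, g l ^ p) :=
        ENNReal.ofReal_le_ofReal (avg_rpow_le hp hg0 h1)
    _ ≤ ENNReal.ofReal (∑ l ∈ Finset.Icc i (i + n), g l ^ p) := by
        refine ENNReal.ofReal_le_ofReal (Finset.sum_le_sum_of_subset_of_nonneg
          (Finset.Icc_subset_Icc_right h2) fun l _ _ => Real.rpow_nonneg (hg0 l) p)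
    _ = ∑ l ∈ Finset.Icc i (i + n), ENNReal.ofReal (g l ^ p) :=
        ENNReal.ofReal_sum_of_nonneg fun l _ => Real.rpow_nonneg (hg0 l) p

lemma Mx_ne_top {g : ℤ → ℝ} (hg0 : ∀ i, 0 ≤ g i) (n : ℕ) (i : ℤ) : Mx g n i ≠ ∞ := by
  have h := Mx_rpow_le le_rfl hg0 n i
  simp only [ENNReal.rpow_one] at h
  exact ne_top_of_le_ne_top (ENNReal.sum_ne_top.mpr fun l _ => ENNReal.ofReal_ne_top) h


/-- Discrete rising sun lemma: from a point where the truncated maximal function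
exceeds `lam`, produce an interval `Ico i0 b` on which the mass exceeds `lam` times the
length, and all of whose points have maximal function at least `lam`. -/
lemma sunrise {g : ℤ → ℝ} (hg0 : ∀ i, 0 ≤ g i) (n : ℕ) {lam : ℝ} (hlam : 0 < lam)
    (i0 : ℤ) (h : ENNReal.ofReal lam < Mx g n i0) :
    ∃ b : ℤ, i0 < b ∧ b ≤ i0 + n + 1 ∧ lam * ((b : ℝ) - i0) ≤ ∑ l ∈ Finset.Ico i0 b, g l ∧
      ∀ i', i0 ≤ i' → i' < b → ENNReal.ofReal lam ≤ Mx g n i' := by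
  rw [Mx, lt_iSup_iff] at h
  obtain ⟨j, hj⟩ := h
  rw [lt_iSup_iff] at hj
  obtain ⟨⟨hij, hjn⟩, hj⟩ := hj
  have havg : lam < avg g i0 j := by
    by_contra hcon
    exact absurd (ENNReal.ofReal_le_ofReal (not_lt.mp hcon)) (not_le.mpr hj)
  have hNpos : (0:ℝ) < (j:ℝ) - i0 + 1 := by
    have : (i0:ℝ) ≤ j := by exact_mod_cast hij
    linarith
  have hsum : lam * ((j:ℝ) - i0 + 1) < ∑ l ∈ Finset.Icc i0 j, g l := by
    rw [avg, one_div, inv_mul_eq_div, lt_div_iff₀ hNpos] at havg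
    linarith
  set φ : ℤ → ℝ := fun m => (∑ l ∈ Finset.Ico i0 m, g l) - lam * ((m:ℝ) - i0) with hφ
  have hjs : j + 1 ∈ Finset.Icc (i0+1) (i0+(n:ℤ)+1) := by
    rw [Finset.mem_Icc]; omega
  obtain ⟨b, hbs, hbmax⟩ := (Finset.Icc (i0+1) (i0+(n:ℤ)+1)).exists_max_image φ ⟨j+1, hjs⟩
  rw [Finset.mem_Icc] at hbs
  have hφj : 0 < φ (j+1) := by
    simp only [hφ, ← Icc_eq_Ico]
    push_cast
    linarith
  have hφb : 0 < φ b := lt_of_lt_of_le hφj (hbmax _ hjs)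
  refine ⟨b, by omega, by omega, ?_, ?_⟩
  · have := hφb
    simp only [hφ] at this
    linarith
  · intro i' h1 h2
    -- mass estimate on `Ico i' b`
    have hkey : lam * ((b:ℝ) - i') ≤ ∑ l ∈ Finset.Ico i' b, g l := by
      rcases eq_or_lt_of_le h1 with rfl | h1'
      · simp only [hφ] at hφb; linarith
      · have hi's : i' ∈ Finset.Icc (i0+1) (i0+(n:ℤ)+1) := by
          rw [Finset.mem_Icc]; omega
        have hle : φ i' ≤ φ b := hbmax _ hi's
        have hsplit : ∑ l ∈ Finset.Ico i0 i', g l + ∑ l ∈ Finset.Ico i' b, g l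
            = ∑ l ∈ Finset.Ico i0 b, g l := by
          rw [← Finset.sum_union (Finset.Ico_disjoint_Ico_consecutive i0 i' b),
            Finset.Ico_union_Ico_eq_Ico h1'.le h2.le]
        simp only [hφ] at hle
        have hcast : ((i':ℤ):ℝ) - i0 + ((b:ℝ) - i') = (b:ℝ) - i0 := by ring
        nlinarith [hle, hsplit]
    -- turn it into a statement about the average over `Icc i' (b-1)`
    have hbb : i' ≤ b - 1 := by omega
    have hbn : b - 1 ≤ i' + n := by omega
    have hN'pos : (0:ℝ) < ((b:ℝ) - 1) - i' + 1 := by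
      have : (i':ℝ) < b := by exact_mod_cast h2
      linarith
    have havg' : lam ≤ avg g i' (b-1) := by
      rw [avg, one_div, inv_mul_eq_div, le_div_iff₀ (by push_cast at hN'pos ⊢; linarith)]
      have hIcc : Finset.Icc i' (b-1) = Finset.Ico i' b := by
        rw [Icc_eq_Ico, sub_add_cancel]
      rw [hIcc]
      push_cast
      calc lam * ((b:ℝ) - 1 - i' + 1) = lam * ((b:ℝ) - i') := by ring
        _ ≤ _ := hkey
    calc ENNReal.ofReal lam ≤ ENNReal.ofReal (avg g i' (b-1)) := ENNReal.ofReal_le_ofReal havg'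
      _ ≤ Mx g n i' := le_Mx g n hbb hbn

/-- Weak type (1,1) inequality with constant 1 for the truncated maximal function. -/
lemma weak_type {g : ℤ → ℝ} (hg0 : ∀ i, 0 ≤ g i) (n : ℕ) {lam : ℝ} (hlam : 0 < lam) :
    ∀ (N : ℕ) (F : Finset ℤ) (a : ℤ), F.card ≤ N → (∀ i ∈ F, a ≤ i) →
      (∀ i ∈ F, ENNReal.ofReal lam < Mx g n i) →
      ENNReal.ofReal lam * F.card ≤
        ∑' i : ℤ, (if a ≤ i ∧ ENNReal.ofReal lam ≤ Mx g n i
          then ENNReal.ofReal (g i) else 0) := by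
  intro N
  induction N with
  | zero =>
    intro F a hcard _ _
    rw [Nat.le_zero, Finset.card_eq_zero] at hcard
    simp [hcard]
  | succ N ih =>
    intro F a hcard ha hlt
    rcases F.eq_empty_or_nonempty with rfl | hne
    · simp
    set i0 := F.min' hne with hi0
    have hi0F : i0 ∈ F := F.min'_mem hne
    have hai0 : a ≤ i0 := ha _ hi0F
    obtain ⟨b, hb1, hb2, hb3, hb4⟩ := sunrise hg0 n hlam i0 (hlt _ hi0F)
    set F' := F.filter (fun x => b ≤ x) with hF'
    have hF'sub : F' ⊆ F := Finset.filter_subset _ _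
    have hi0F' : i0 ∉ F' := by
      simp only [hF', Finset.mem_filter]
      rintro ⟨-, hb⟩; omega
    have hcard' : F'.card < F.card :=
      Finset.card_lt_card (Finset.ssubset_iff_of_subset hF'sub |>.mpr ⟨i0, hi0F, hi0F'⟩)
    have key := ih F' b (by omega) (fun i hi => (Finset.mem_filter.mp hi).2)
      (fun i hi => hlt i (hF'sub hi))
    -- counting
    set Fs := F.filter (fun x => x < b) with hFs
    have hcards : Fs.card + F'.card = F.card := by
      have hid : F.filter (fun x => ¬ x < b) = F' := by
        ext x; simp [hF', not_lt]
      rw [hFs, ← hid, Finset.card_filter_add_card_filter_not (s := F) (p := fun x => x < b)]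
    have hFsub : Fs ⊆ Finset.Ico i0 b := by
      intro x hx
      rw [hFs, Finset.mem_filter] at hx
      rw [Finset.mem_Ico]
      exact ⟨F.min'_le x hx.1, hx.2⟩
    have hcardle : (Fs.card : ℝ≥0∞) ≤ ENNReal.ofReal ((b:ℝ) - i0) := by
      have h1 : Fs.card ≤ (Finset.Ico i0 b).card := Finset.card_le_card hFsub
      have h2 : (Finset.Ico i0 b).card = (b - i0).toNat := Int.card_Ico _ _
      have h3 : (((b - i0).toNat : ℕ) : ℝ≥0∞) = ENNReal.ofReal ((b:ℝ) - i0) := by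
        rw [← ENNReal.ofReal_natCast, ← Int.cast_natCast (R := ℝ),
          Int.toNat_of_nonneg (by omega)]
        push_cast; ring_nf
      calc (Fs.card : ℝ≥0∞) ≤ ((b - i0).toNat : ℕ) := by exact_mod_cast h1.trans h2.le
        _ = ENNReal.ofReal ((b:ℝ) - i0) := h3
    have hbound1 : ENNReal.ofReal lam * Fs.card
        ≤ ∑' i : ℤ, (if i ∈ Finset.Ico i0 b then ENNReal.ofReal (g i) else 0) := by
      have h4 : ENNReal.ofReal lam * Fs.card ≤ ENNReal.ofReal (∑ l ∈ Finset.Ico i0 b, g l) := by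
        calc ENNReal.ofReal lam * Fs.card ≤ ENNReal.ofReal lam * ENNReal.ofReal ((b:ℝ) - i0) :=
              mul_le_mul_right hcardle _
          _ = ENNReal.ofReal (lam * ((b:ℝ) - i0)) := (ENNReal.ofReal_mul hlam.le).symm
          _ ≤ _ := ENNReal.ofReal_le_ofReal hb3
      refine h4.trans ?_
      rw [ENNReal.ofReal_sum_of_nonneg (fun l _ => hg0 l)]
      rw [tsum_eq_sum (s := Finset.Ico i0 b) (fun x hx => by simp [hx])]
      exact le_of_eq (Finset.sum_congr rfl fun x hx => by simp [hx])
    -- combine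
    have hsplit : (F.card : ℝ≥0∞) = Fs.card + F'.card := by exact_mod_cast hcards.symm
    rw [hsplit, mul_add]
    have hcomb := add_le_add hbound1 key
    rw [← ENNReal.tsum_add] at hcomb
    refine hcomb.trans (ENNReal.tsum_le_tsum fun i => ?_)
    by_cases hi : i ∈ Finset.Ico i0 b
    · rw [Finset.mem_Ico] at hi
      have hnb : ¬ (b ≤ i ∧ ENNReal.ofReal lam ≤ Mx g n i) := by
        rintro ⟨hb, -⟩; omega
      rw [if_pos (Finset.mem_Ico.mpr hi), if_neg hnb, add_zero,
        if_pos ⟨hai0.trans hi.1, hb4 i hi.1 hi.2⟩]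
    · rw [if_neg hi, zero_add]
      by_cases hc : b ≤ i ∧ ENNReal.ofReal lam ≤ Mx g n i
      · rw [if_pos hc, if_pos ⟨by omega, hc.2⟩]
      · rw [if_neg hc]; exact zero_le


/-- Integral of a power on `Ioo 0 m` (as a lower integral). -/
lemma lint_rpow {r : ℝ} (hr : -1 < r) {m : ℝ} (hm : 0 ≤ m) :
    ∫⁻ x in Set.Ioo (0:ℝ) m, ENNReal.ofReal (x ^ r)
      = ENNReal.ofReal (m ^ (r+1) / (r+1)) := by
  have hr1 : 0 < r + 1 := by linarith
  have hint : IntervalIntegrable (fun x : ℝ => x ^ r) volume 0 m :=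
    intervalIntegral.intervalIntegrable_rpow' hr
  have hIoO : MeasureTheory.IntegrableOn (fun x : ℝ => x ^ r) (Set.Ioo 0 m) volume := by
    have := (intervalIntegrable_iff_integrableOn_Ioo_of_le hm).mp hint
    exact this
  rw [← MeasureTheory.ofReal_integral_eq_lintegral_ofReal hIoO]
  · congr 1
    rw [← MeasureTheory.integral_Ioc_eq_integral_Ioo, ← intervalIntegral.integral_of_le hm,
      integral_rpow (Or.inl hr), Real.zero_rpow hr1.ne']
    ring
  · exact MeasureTheory.ae_restrict_of_forall_mem measurableSet_Ioo
      fun x hx => Real.rpow_nonneg hx.1.le r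

lemma measurable_rpow_c (r : ℝ) : Measurable fun x : ℝ => x ^ r := by
  have h : (fun x : ℝ => x ^ r) = fun x =>
      if 0 < x then Real.exp (Real.log x * r)
      else if x = 0 then (if r = 0 then 1 else 0)
      else Real.exp (Real.log x * r) * Real.cos (r * Real.pi) := by
    funext x
    rcases lt_trichotomy x 0 with hx | rfl | hx
    · rw [if_neg (by linarith), if_neg hx.ne, Real.rpow_def_of_neg hx]
    · rw [if_neg (lt_irrefl _), if_pos rfl]
      rcases eq_or_ne r 0 with rfl | hr
      · simp
      · simp [Real.zero_rpow hr, hr]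
    · rw [if_pos hx, Real.rpow_def_of_pos hx]
  rw [h]
  refine Measurable.ite measurableSet_Ioi
    (Real.measurable_exp.comp (Real.measurable_log.mul measurable_const)) ?_
  exact Measurable.ite (measurableSet_eq)
    measurable_const
    ((Real.measurable_exp.comp (Real.measurable_log.mul measurable_const)).mul measurable_const)

lemma measurable_aux (c r : ℝ) :
    Measurable (fun x : ℝ => ENNReal.ofReal (c * x ^ r)) :=
  ENNReal.measurable_ofReal.comp ((measurable_rpow_c r).const_mul c)

/-- Layer cake identity for a single value. -/
lemma layer_single {p : ℝ} (hp : 1 < p) {m : ℝ} (hm : 0 ≤ m) :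
    ENNReal.ofReal m ^ p
      = ∫⁻ x in Set.Ioo (0:ℝ) m, ENNReal.ofReal (p * x ^ (p-1)) := by
  have hp0 : (0:ℝ) < p := by linarith
  calc ENNReal.ofReal m ^ p = ENNReal.ofReal (m ^ p) :=
        ENNReal.ofReal_rpow_of_nonneg hm hp0.le
    _ = ENNReal.ofReal p * ENNReal.ofReal (m ^ (p - 1 + 1) / (p - 1 + 1)) := by
        rw [← ENNReal.ofReal_mul hp0.le]
        congr 1
        have : p - 1 + 1 = p := by ring
        rw [this]; field_simp
    _ = ∫⁻ x in Set.Ioo (0:ℝ) m, ENNReal.ofReal (p * x ^ (p-1)) := by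
        rw [← lint_rpow (by linarith : (-1:ℝ) < p - 1) hm,
          ← MeasureTheory.lintegral_const_mul' _ _ ENNReal.ofReal_ne_top]
        refine lintegral_congr_ae (MeasureTheory.ae_restrict_of_forall_mem measurableSet_Ioo
          fun x hx => ?_)
        simp only [← ENNReal.ofReal_mul hp0.le]

/-- Layer cake computation for the dual exponent. -/
lemma layer_single' {p : ℝ} (hp : 1 < p) {m : ℝ} (hm : 0 ≤ m) :
    ∫⁻ x in Set.Ioo (0:ℝ) m, ENNReal.ofReal (p * x ^ (p-2))
      = ENNReal.ofReal (p / (p-1)) * ENNReal.ofReal (m ^ (p-1)) := by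
  have hp0 : (0:ℝ) < p := by linarith
  have h1 : ∫⁻ x in Set.Ioo (0:ℝ) m, ENNReal.ofReal (p * x ^ (p-2))
      = ENNReal.ofReal p * ENNReal.ofReal (m ^ (p - 2 + 1) / (p - 2 + 1)) := by
    rw [← lint_rpow (by linarith : (-1:ℝ) < p - 2) hm,
      ← MeasureTheory.lintegral_const_mul' _ _ ENNReal.ofReal_ne_top]
    refine lintegral_congr_ae (MeasureTheory.ae_restrict_of_forall_mem measurableSet_Ioo
      fun x hx => ?_)
    simp only [← ENNReal.ofReal_mul hp0.le]
  rw [h1, ← ENNReal.ofReal_mul hp0.le, ← ENNReal.ofReal_mul (div_nonneg hp0.le (by linarith))]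
  congr 1
  have h2 : p - 2 + 1 = p - 1 := by ring
  rw [h2]
  field_simp


/-- Layer cake estimate: partial sums of `p`-th powers of the truncated maximal function are
controlled by `p/(p-1)` times the pairing of `g` with the `(p-1)`-st power. -/
lemma layer {p : ℝ} (hp : 1 < p) {g : ℤ → ℝ} (hg0 : ∀ i, 0 ≤ g i) (n : ℕ) (W : Finset ℤ) :
    ∑ i ∈ W, Mx g n i ^ p ≤
      ENNReal.ofReal (p / (p-1)) * ∑' i : ℤ, ENNReal.ofReal (g i) * Mx g n i ^ (p - 1) := by
  have hp0 : (0:ℝ) < p := by linarith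
  set m : ℤ → ℝ := fun i => (Mx g n i).toReal with hm
  have hm0 : ∀ i, 0 ≤ m i := fun i => ENNReal.toReal_nonneg
  have hMx : ∀ i, Mx g n i = ENNReal.ofReal (m i) := fun i =>
    (ENNReal.ofReal_toReal (Mx_ne_top hg0 n i)).symm
  have hA : ∀ i, Mx g n i ^ p = ∫⁻ x in Set.Ioi (0:ℝ),
      (Set.Ioo (0:ℝ) (m i)).indicator (fun x => ENNReal.ofReal (p * x ^ (p-1))) x := by
    intro i
    rw [MeasureTheory.lintegral_indicator measurableSet_Ioo _,
      MeasureTheory.Measure.restrict_restrict measurableSet_Ioo,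
      Set.inter_eq_self_of_subset_left (fun x hx => hx.1), hMx i, layer_single hp (hm0 i)]
  set H : ℤ → ℝ → ℝ≥0∞ := fun i x =>
    (Set.Ioc (0:ℝ) (m i)).indicator
      (fun x => ENNReal.ofReal (p * x ^ (p-2)) * ENNReal.ofReal (g i)) x with hH
  have hC : ∀ x ∈ Set.Ioi (0:ℝ),
      ∑ i ∈ W, (Set.Ioo (0:ℝ) (m i)).indicator (fun x => ENNReal.ofReal (p * x ^ (p-1))) x
        ≤ ∑' i : ℤ, H i x := by
    intro x hx
    have hx0 : (0:ℝ) < x := hx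
    have hL : ∑ i ∈ W,
        (Set.Ioo (0:ℝ) (m i)).indicator (fun x => ENNReal.ofReal (p * x ^ (p-1))) x
        = ((W.filter fun i => x < m i).card : ℝ≥0∞) * ENNReal.ofReal (p * x ^ (p-1)) := by
      have hind : ∀ i, (Set.Ioo (0:ℝ) (m i)).indicator
          (fun y => ENNReal.ofReal (p * y ^ (p-1))) x
          = if x < m i then ENNReal.ofReal (p * x ^ (p-1)) else 0 := by
        intro i
        simp [Set.indicator_apply, Set.mem_Ioo, hx0]
      rw [Finset.sum_congr rfl fun i _ => hind i, ← Finset.sum_filter,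
        Finset.sum_const, nsmul_eq_mul]
    have hWT : ENNReal.ofReal x * ((W.filter fun i => x < m i).card : ℝ≥0∞) ≤
        ∑' i : ℤ, (if x ≤ m i then ENNReal.ofReal (g i) else 0) := by
      set F := W.filter fun i => x < m i with hF
      rcases F.eq_empty_or_nonempty with hFe | hFne
      · rw [hFe]; simp
      · have h1 := weak_type hg0 n hx0 F.card F (F.min' hFne) le_rfl
          (fun i hi => F.min'_le i hi)
          (fun i hi => by
            rw [hMx i]
            rw [hF, Finset.mem_filter] at hi
            exact (ENNReal.ofReal_lt_ofReal_iff_of_nonneg hx0.le).mpr hi.2)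
        refine h1.trans (ENNReal.tsum_le_tsum fun i => ?_)
        by_cases hc : F.min' hFne ≤ i ∧ ENNReal.ofReal x ≤ Mx g n i
        · rw [if_pos hc, if_pos]
          have h2 := hc.2
          rw [hMx i] at h2
          exact (ENNReal.ofReal_le_ofReal_iff (hm0 i)).mp h2
        · rw [if_neg hc]; exact zero_le
    rw [hL]
    have harith : ENNReal.ofReal (p * x ^ (p-1))
        = ENNReal.ofReal (p * x ^ (p-2)) * ENNReal.ofReal x := by
      rw [← ENNReal.ofReal_mul (mul_nonneg hp0.le (Real.rpow_nonneg hx0.le _))]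
      congr 1
      have hxx : x ^ (p-1) = x ^ (p-2) * x := by
        rw [show p - 1 = p - 2 + 1 by ring, Real.rpow_add_one hx0.ne' (p-2)]
      rw [hxx]; ring
    calc ((W.filter fun i => x < m i).card : ℝ≥0∞) * ENNReal.ofReal (p * x ^ (p-1))
        = ENNReal.ofReal (p * x ^ (p-2)) *
            (ENNReal.ofReal x * ((W.filter fun i => x < m i).card : ℝ≥0∞)) := by
          rw [harith]; ring
      _ ≤ ENNReal.ofReal (p * x ^ (p-2)) *
            ∑' i : ℤ, (if x ≤ m i then ENNReal.ofReal (g i) else 0) :=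
          mul_le_mul_right hWT _
      _ = ∑' i : ℤ, H i x := by
          rw [← ENNReal.tsum_mul_left]
          refine tsum_congr fun i => ?_
          by_cases hc : x ≤ m i
          · rw [if_pos hc, hH]
            simp [Set.indicator_apply, Set.mem_Ioc, hx0, hc]
          · rw [if_neg hc, hH]
            simp [Set.indicator_apply, Set.mem_Ioc, hx0, hc]
    -- end of pointwise bound
  have hE : ∀ i : ℤ, (∫⁻ x in Set.Ioi (0:ℝ), H i x)
      = ENNReal.ofReal (p / (p-1)) * (ENNReal.ofReal (g i) * Mx g n i ^ (p-1)) := by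
    intro i
    rw [hH, MeasureTheory.lintegral_indicator measurableSet_Ioc _,
      MeasureTheory.Measure.restrict_restrict measurableSet_Ioc,
      Set.inter_eq_self_of_subset_left (fun y hy => hy.1),
      MeasureTheory.lintegral_mul_const' _ _ ENNReal.ofReal_ne_top,
      ← MeasureTheory.Measure.restrict_congr_set MeasureTheory.Ioo_ae_eq_Ioc,
      layer_single' hp (hm0 i), hMx i,
      ENNReal.ofReal_rpow_of_nonneg (hm0 i) (by linarith : (0:ℝ) ≤ p - 1)]
    ring
  calc ∑ i ∈ W, Mx g n i ^ p
      = ∑ i ∈ W, ∫⁻ x in Set.Ioi (0:ℝ),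
          (Set.Ioo (0:ℝ) (m i)).indicator (fun x => ENNReal.ofReal (p * x ^ (p-1))) x :=
        Finset.sum_congr rfl fun i _ => hA i
    _ = ∫⁻ x in Set.Ioi (0:ℝ), ∑ i ∈ W,
          (Set.Ioo (0:ℝ) (m i)).indicator (fun x => ENNReal.ofReal (p * x ^ (p-1))) x :=
        (MeasureTheory.lintegral_finset_sum _
          fun i _ => (measurable_aux p (p-1)).indicator measurableSet_Ioo).symm
    _ ≤ ∫⁻ x in Set.Ioi (0:ℝ), ∑' i : ℤ, H i x :=
        MeasureTheory.lintegral_mono_ae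
          ((MeasureTheory.ae_restrict_iff' measurableSet_Ioi).mpr
            (MeasureTheory.ae_of_all _ hC))
    _ = ∑' i : ℤ, ∫⁻ x in Set.Ioi (0:ℝ), H i x :=
        MeasureTheory.lintegral_tsum fun i =>
          (((measurable_aux p (p-2)).mul_const _).indicator measurableSet_Ioc).aemeasurable
    _ = ENNReal.ofReal (p / (p-1)) * ∑' i : ℤ, ENNReal.ofReal (g i) * Mx g n i ^ (p - 1) := by
        rw [← ENNReal.tsum_mul_left]
        exact tsum_congr hE


/-- A priori finiteness of the `ℓ^p` norm of the truncated maximal function. -/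
lemma apriori {p : ℝ} (hp : 1 ≤ p) {g : ℤ → ℝ} (hg0 : ∀ i, 0 ≤ g i)
    (hB : ∑' i : ℤ, ENNReal.ofReal (g i ^ p) ≠ ∞) (n : ℕ) :
    ∑' i : ℤ, Mx g n i ^ p ≠ ∞ := by
  have h1 : ∑' i : ℤ, Mx g n i ^ p
      ≤ ∑' i : ℤ, ∑ l ∈ Finset.Icc i (i + (n:ℤ)), ENNReal.ofReal (g l ^ p) :=
    ENNReal.tsum_le_tsum fun i => Mx_rpow_le hp hg0 n i
  have h2 : ∀ i : ℤ, ∑ l ∈ Finset.Icc i (i + (n:ℤ)), ENNReal.ofReal (g l ^ p)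
      = ∑ k ∈ Finset.Icc (0:ℤ) (n:ℤ), ENNReal.ofReal (g (i + k) ^ p) := by
    intro i
    rw [show Finset.Icc i (i + (n:ℤ)) = Finset.map ⟨fun x => i + x, add_right_injective i⟩
        (Finset.Icc (0:ℤ) (n:ℤ)) from ?_]
    · rw [Finset.sum_map]; simp [Function.Embedding.coeFn_mk]
    · ext x
      simp only [Finset.mem_map, Finset.mem_Icc, Function.Embedding.coeFn_mk]
      constructor
      · rintro ⟨h1, h2⟩; exact ⟨x - i, by omega, by omega⟩
      · rintro ⟨y, hy, rfl⟩; omega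
  have h3 : ∑' i : ℤ, ∑ k ∈ Finset.Icc (0:ℤ) (n:ℤ), ENNReal.ofReal (g (i + k) ^ p)
      = ∑ k ∈ Finset.Icc (0:ℤ) (n:ℤ), ∑' i : ℤ, ENNReal.ofReal (g (i + k) ^ p) :=
    Summable.tsum_finsetSum fun _ _ => ENNReal.summable
  have h4 : ∀ k : ℤ, ∑' i : ℤ, ENNReal.ofReal (g (i + k) ^ p)
      = ∑' i : ℤ, ENNReal.ofReal (g i ^ p) :=
    fun k => (Equiv.addRight k).tsum_eq fun i => ENNReal.ofReal (g i ^ p)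
  have h5 : ∑ k ∈ Finset.Icc (0:ℤ) (n:ℤ), ∑' i : ℤ, ENNReal.ofReal (g (i + k) ^ p) ≠ ⊤ := by
    rw [Finset.sum_congr rfl fun k _ => h4 k, Finset.sum_const, nsmul_eq_mul]
    exact ENNReal.mul_ne_top (by simp) hB
  exact ne_top_of_le_ne_top h5 (h1.trans_eq (by rw [tsum_congr h2, h3]))

/-- Hölder's inequality for sums over `ℤ` with values in `ℝ≥0∞`. -/
lemma holder {p q : ℝ} (hpq : p.HolderConjugate q) (a b : ℤ → ℝ≥0∞) :
    ∑' i : ℤ, a i * b i ≤ (∑' i : ℤ, a i ^ p) ^ (1/p) * (∑' i : ℤ, b i ^ q) ^ (1/q) := by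
  have h := ENNReal.lintegral_mul_le_Lp_mul_Lq (MeasureTheory.Measure.count : Measure ℤ) hpq
    (measurable_of_countable a).aemeasurable (measurable_of_countable b).aemeasurable
  simpa [MeasureTheory.lintegral_count] using h

lemma cancel {S c : ℝ≥0∞} {p q : ℝ} (hqp : 0 < p) (hq : 0 < q) (hpq : 1/p + 1/q = 1)
    (hS : S ≠ ∞) (h : S ≤ c * S ^ (1/q)) : S ≤ c ^ p := by
  rcases eq_or_ne S 0 with rfl | hS0
  · exact zero_le
  · have h1 : S = S ^ (1/p) * S ^ (1/q) := by
      rw [← ENNReal.rpow_add _ _ hS0 hS, hpq, ENNReal.rpow_one]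
    have h2 : S ^ (1/p) * S ^ (1/q) ≤ c * S ^ (1/q) := h1 ▸ h
    have h3 : S ^ (1/q) ≠ 0 := by
      simp only [ne_eq, ENNReal.rpow_eq_zero_iff, not_or]
      constructor
      · rintro ⟨h, -⟩; exact hS0 h
      · rintro ⟨h, -⟩; exact hS h
    have h4 : S ^ (1/q) ≠ ∞ := by
      simp only [ne_eq, ENNReal.rpow_eq_top_iff, not_or]
      constructor
      · rintro ⟨h, -⟩; exact hS0 h
      · rintro ⟨h, -⟩; exact hS h
    have h5 : S ^ (1/p) ≤ c := (ENNReal.mul_le_mul_iff_left h3 h4).mp h2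
    calc S = (S ^ (1/p)) ^ p := by
          rw [← ENNReal.rpow_mul, one_div_mul_cancel hqp.ne', ENNReal.rpow_one]
      _ ≤ c ^ p := ENNReal.rpow_le_rpow h5 hqp.le

/-- The `ℓ^p` bound for the truncated maximal function, with the sharp constant. -/
lemma Mx_tsum_bound {p : ℝ} (hp : 1 < p) {g : ℤ → ℝ} (hg0 : ∀ i, 0 ≤ g i)
    (hsum : Summable fun i : ℤ => g i ^ p) (n : ℕ) :
    ∑' i : ℤ, Mx g n i ^ p
      ≤ ENNReal.ofReal ((p/(p-1)) ^ p) * ∑' i : ℤ, ENNReal.ofReal (g i ^ p) := by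
  have hp0 : (0:ℝ) < p := by linarith
  have hp1 : (0:ℝ) < p - 1 := by linarith
  set q : ℝ := p / (p - 1) with hq
  have hq0 : (0:ℝ) < q := by positivity
  have hpq : p.HolderConjugate q := Real.HolderConjugate.conjExponent hp
  set B : ℝ≥0∞ := ∑' i : ℤ, ENNReal.ofReal (g i ^ p) with hB
  have hBeq : B = ENNReal.ofReal (∑' i : ℤ, g i ^ p) :=
    (ENNReal.ofReal_tsum_of_nonneg (fun i => Real.rpow_nonneg (hg0 i) p) hsum).symm
  have hBne : B ≠ ∞ := by rw [hBeq]; exact ENNReal.ofReal_ne_top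
  set S : ℝ≥0∞ := ∑' i : ℤ, Mx g n i ^ p with hS
  have hSne : S ≠ ∞ := apriori hp.le hg0 hBne n
  have hlayer : S ≤ ENNReal.ofReal q
      * ∑' i : ℤ, ENNReal.ofReal (g i) * Mx g n i ^ (p - 1) := by
    rw [hS, ENNReal.tsum_eq_iSup_sum]
    exact iSup_le fun W => layer hp hg0 n W
  have hhold : ∑' i : ℤ, ENNReal.ofReal (g i) * Mx g n i ^ (p - 1)
      ≤ B ^ (1/p) * S ^ (1/q) := by
    have h := holder hpq (fun i => ENNReal.ofReal (g i)) (fun i => Mx g n i ^ (p-1))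
    refine h.trans (le_of_eq ?_)
    congr 1
    · congr 1
      refine tsum_congr fun i => ?_
      rw [ENNReal.ofReal_rpow_of_nonneg (hg0 i) hp0.le]
    · congr 1
      refine tsum_congr fun i => ?_
      rw [← ENNReal.rpow_mul]
      congr 1
      rw [hq]
      field_simp
  have hfinal : S ≤ (ENNReal.ofReal q * B ^ (1/p)) * S ^ (1/q) := by
    calc S ≤ ENNReal.ofReal q * ∑' i : ℤ, ENNReal.ofReal (g i) * Mx g n i ^ (p - 1) := hlayer
      _ ≤ ENNReal.ofReal q * (B ^ (1/p) * S ^ (1/q)) := mul_le_mul_right hhold _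
      _ = (ENNReal.ofReal q * B ^ (1/p)) * S ^ (1/q) := by ring
  have hcan := cancel hp0 hq0 (by rw [one_div, one_div, hpq.inv_add_inv_eq_one]) hSne hfinal
  refine hcan.trans (le_of_eq ?_)
  rw [ENNReal.mul_rpow_of_nonneg _ _ hp0.le, ← ENNReal.rpow_mul,
    one_div_mul_cancel hp0.ne', ENNReal.rpow_one,
    ENNReal.ofReal_rpow_of_nonneg hq0.le hp0.le]


/-- Monotone convergence for sums over `ℤ`. -/
lemma tsum_iSup_mono {f : ℕ → ℤ → ℝ≥0∞} (hmono : Monotone f) :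
    ∑' i : ℤ, ⨆ n : ℕ, f n i = ⨆ n : ℕ, ∑' i : ℤ, f n i := by
  have h := MeasureTheory.lintegral_iSup (μ := (MeasureTheory.Measure.count : Measure ℤ))
    (fun n => measurable_of_countable (f n)) hmono
  simpa [MeasureTheory.lintegral_count] using h

end CesaroAux

open CesaroAux in
/-- Two-sided Cesàro maximal inequality on `ℤ` (Hardy–Littlewood):
`∑_{i ∈ ℤ} sup_{j ≥ i} ((1/(j−i+1)) |∑_{l=i}^j g(l)|)^p ≤ (p/(p−1))^p ∑_{i ∈ ℤ} |g(i)|^p`. -/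
theorem cesaro_maximal_inequality_int (p : ℝ) (hp : 1 < p)
    (g : ℤ → ℝ) (hg : Summable (fun i : ℤ => |g i| ^ p)) :
    ∑' i : ℤ, (⨆ j : ℤ, ⨆ _ : i ≤ j,
        ENNReal.ofReal ((1 / ((j : ℝ) - i + 1)) * |∑ l ∈ Finset.Icc i j, g l|)) ^ p
      ≤ ENNReal.ofReal ((p / (p - 1)) ^ p * ∑' i : ℤ, |g i| ^ p) := by
  have hp0 : (0:ℝ) < p := by linarith
  set G : ℤ → ℝ := fun i => |g i| with hG
  have hg0 : ∀ i, 0 ≤ G i := fun i => abs_nonneg _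
  have hsum : Summable fun i : ℤ => G i ^ p := hg
  -- pointwise domination by the (truncated) maximal functions of |g|
  have hstep : ∀ i : ℤ, (⨆ j : ℤ, ⨆ _ : i ≤ j,
      ENNReal.ofReal ((1 / ((j : ℝ) - i + 1)) * |∑ l ∈ Finset.Icc i j, g l|))
        ≤ ⨆ n : ℕ, Mx G n i := by
    intro i
    refine iSup₂_le fun j hj => ?_
    have hNpos : (0:ℝ) < (j:ℝ) - i + 1 := by
      have : (i:ℝ) ≤ j := by exact_mod_cast hj
      linarith
    have h1 : (1 / ((j : ℝ) - i + 1)) * |∑ l ∈ Finset.Icc i j, g l| ≤ avg G i j := by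
      rw [avg]
      exact mul_le_mul_of_nonneg_left (Finset.abs_sum_le_sum_abs _ _) (by positivity)
    have h2 : j ≤ i + ((j - i).toNat : ℤ) := by
      rw [Int.toNat_of_nonneg (by omega)]; omega
    calc ENNReal.ofReal ((1 / ((j : ℝ) - i + 1)) * |∑ l ∈ Finset.Icc i j, g l|)
        ≤ ENNReal.ofReal (avg G i j) := ENNReal.ofReal_le_ofReal h1
      _ ≤ Mx G (j - i).toNat i := le_Mx G _ hj h2
      _ ≤ ⨆ n : ℕ, Mx G n i := le_iSup (fun n => Mx G n i) _
  have hmono : Monotone fun n : ℕ => fun i : ℤ => Mx G n i ^ p :=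
    fun n n' hnn i => ENNReal.rpow_le_rpow (Mx_mono G i hnn) hp0.le
  calc ∑' i : ℤ, (⨆ j : ℤ, ⨆ _ : i ≤ j,
        ENNReal.ofReal ((1 / ((j : ℝ) - i + 1)) * |∑ l ∈ Finset.Icc i j, g l|)) ^ p
      ≤ ∑' i : ℤ, (⨆ n : ℕ, Mx G n i) ^ p :=
        ENNReal.tsum_le_tsum fun i => ENNReal.rpow_le_rpow (hstep i) hp0.le
    _ = ∑' i : ℤ, ⨆ n : ℕ, Mx G n i ^ p :=
        tsum_congr fun i => iSup_rpow (fun n => Mx G n i) hp0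
    _ = ⨆ n : ℕ, ∑' i : ℤ, Mx G n i ^ p := tsum_iSup_mono hmono
    _ ≤ ENNReal.ofReal ((p/(p-1)) ^ p) * ∑' i : ℤ, ENNReal.ofReal (G i ^ p) :=
        iSup_le fun n => Mx_tsum_bound hp hg0 hsum n
    _ = ENNReal.ofReal ((p / (p - 1)) ^ p * ∑' i : ℤ, |g i| ^ p) := by
        rw [← ENNReal.ofReal_tsum_of_nonneg (fun i => Real.rpow_nonneg (hg0 i) p) hsum,
          ← ENNReal.ofReal_mul (Real.rpow_nonneg (div_nonneg hp0.le (by linarith)) p)]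
end
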